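/- arXiv:2212.01513 — 9 statements merged into one kernel-verified Lean document; each statement's English description precedes it below -/
import Mathlib

section
/- If H is α-depolarizing and g : [-1,∞) → [-1,0] is monotonic non-decreasing, concave, and twice differentiable wherever it is nonzero, then the pair (H, g) is α-subdepolarizing: for all constants 0 < c₁,...,c_T < 1 and all x, E_{y∼x} Π_t f(c_t H(y)/E*) ≥ Π_t f(c_t (1-α) H(x)/E*), where f(u) = -g(-u) and E* = min_z H(z) < 0. -/
open Finset Set

/-- Product of nonneg, monotone, convex functions on a convex set is convex. -/
lemma convexOn_prod {ι : Type*} (s : Finset ι) (F : ι → ℝ → ℝ) (S : Set ℝ) (hS : Convex ℝ S)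
    (hconv : ∀ i ∈ s, ConvexOn ℝ S (F i)) (hmono : ∀ i ∈ s, MonotoneOn (F i) S)
    (hpos : ∀ i ∈ s, ∀ x ∈ S, 0 ≤ F i x) :
    ConvexOn ℝ S (fun x => ∏ i ∈ s, F i x) := by
  classical
  induction s using Finset.cons_induction with
  | empty => simpa using convexOn_const 1 hS
  | cons a s ha ih =>
    have hconv' : ∀ i ∈ s, ConvexOn ℝ S (F i) := fun i hi => hconv i (mem_cons_of_mem hi)
    have hmono' : ∀ i ∈ s, MonotoneOn (F i) S := fun i hi => hmono i (mem_cons_of_mem hi)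
    have hpos' : ∀ i ∈ s, ∀ x ∈ S, 0 ≤ F i x := fun i hi => hpos i (mem_cons_of_mem hi)
    have hPconv := ih hconv' hmono' hpos'
    have hPpos : ∀ x ∈ S, 0 ≤ ∏ i ∈ s, F i x := fun x hx =>
      Finset.prod_nonneg fun i hi => hpos' i hi x hx
    have hPmono : MonotoneOn (fun x => ∏ i ∈ s, F i x) S := by
      intro u hu v hv huv
      exact Finset.prod_le_prod (fun i hi => hpos' i hi u hu)
        (fun i hi => hmono' i hi hu hv huv)
    have haconv := hconv a (mem_cons_self a s)
    have hamono := hmono a (mem_cons_self a s)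
    have hapos := hpos a (mem_cons_self a s)
    have hmv : MonovaryOn (F a) (fun x => ∏ i ∈ s, F i x) S := by
      intro u hu v hv hlt
      rcases le_total u v with h | h
      · exact hamono hu hv h
      · exact absurd (hPmono hv hu h) (not_le_of_gt hlt)
    have := haconv.mul hPconv (fun x hx => hapos x hx) (fun x hx => hPpos x hx) hmv
    simpa [Finset.prod_insert ha, Pi.mul_def] using this

/-- If `H` is `α`-depolarizing and `g : [-1,∞) → [-1,0]` is monotone non-decreasing,
concave and twice differentiable wherever nonzero, then `(H, g)` is
`α`-subdepolarizing, where `f(u) = -g(-u)` and `E* = min H < 0`. -/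
theorem depolarizing_implies_subdepolarizing (n T : ℕ) (hn : 0 < n) (α : ℝ)
    (H : (Fin n → ℝ) → ℝ) (g : ℝ → ℝ) (Estar : ℝ)
    (hEstar_neg : Estar < 0)
    (hEstar_min : ∀ z : Fin n → ℝ, (∀ i, z i = 1 ∨ z i = -1) → Estar ≤ H z)
    (hEstar_attained : ∃ z : Fin n → ℝ, (∀ i, z i = 1 ∨ z i = -1) ∧ H z = Estar)
    (hmean : ∑ z : Fin n → Bool, H (fun i => if z i then 1 else -1) = 0)
    (hg_mono : MonotoneOn g (Set.Ici (-1)))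
    (hg_conc : ConcaveOn ℝ (Set.Ici (-1)) g)
    (hg_range : ∀ x ∈ Set.Ici (-1 : ℝ), g x ∈ Set.Icc (-1 : ℝ) 0)
    (hg_diff : ∀ x ∈ Set.Ici (-1 : ℝ), g x ≠ 0 → ContDiffAt ℝ 2 g x)
    (hdep : ∀ x : Fin n → ℝ, (∀ i, x i = 1 ∨ x i = -1) →
      (1 / (n : ℝ)) * ∑ i, H (Function.update x i (-(x i))) = (1 - α) * H x)
    (c : Fin T → ℝ) (hc : ∀ t, 0 < c t ∧ c t < 1)
    (x : Fin n → ℝ) (hx : ∀ i, x i = 1 ∨ x i = -1) :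
    (1 / (n : ℝ)) * ∑ i, ∏ t, -g (-(c t * H (Function.update x i (-(x i))) / Estar))
      ≥ ∏ t, -g (-(c t * (1 - α) * H x / Estar)) := by
  classical
  set S : Set ℝ := Set.Iic (1 : ℝ) with hS
  -- f u = -g (-u) on S
  set f : ℝ → ℝ := fun u => -g (-u) with hf
  have hmemS : ∀ u ∈ S, (-u : ℝ) ∈ Set.Ici (-1 : ℝ) := by
    intro u hu; simp only [Set.mem_Ici]; simp only [Set.mem_Iic, hS] at hu; linarith
  have hf_conv : ConvexOn ℝ S f := by
    refine ⟨convex_Iic 1, fun u hu v hv a b ha hb hab => ?_⟩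
    have := hg_conc.2 (hmemS u hu) (hmemS v hv) ha hb hab
    simp only [smul_eq_mul] at this ⊢
    have hre : -(a * u + b * v) = a * (-u) + b * (-v) := by ring
    simp only [hf, hre]
    linarith
  have hf_mono : MonotoneOn f S := by
    intro u hu v hv huv
    simp only [hf, neg_le_neg_iff]
    exact hg_mono (hmemS v hv) (hmemS u hu) (by linarith)
  have hf_pos : ∀ u ∈ S, 0 ≤ f u := by
    intro u hu
    have := (hg_range (-u) (hmemS u hu)).2
    simp only [hf]; linarith
  -- per-factor functions
  set F : Fin T → ℝ → ℝ := fun t h => f (c t * h) with hF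
  have hct : ∀ t, ∀ h ∈ S, c t * h ∈ S := by
    intro t h hh
    obtain ⟨h1, h2⟩ := hc t
    simp only [Set.mem_Iic, hS] at hh ⊢
    nlinarith
  have hF_conv : ∀ t, ConvexOn ℝ S (F t) := by
    intro t
    refine ⟨convex_Iic 1, fun u hu v hv a b ha hb hab => ?_⟩
    have hre : c t * (a • u + b • v) = a • (c t * u) + b • (c t * v) := by
      simp [smul_eq_mul]; ring
    simp only [hF, hre]
    exact hf_conv.2 (hct t u hu) (hct t v hv) ha hb hab
  have hF_mono : ∀ t, MonotoneOn (F t) S := by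
    intro t u hu v hv huv
    exact hf_mono (hct t u hu) (hct t v hv)
      (mul_le_mul_of_nonneg_left huv (hc t).1.le)
  have hF_pos : ∀ t, ∀ h ∈ S, 0 ≤ F t h := fun t h hh => hf_pos _ (hct t h hh)
  have hProd : ConvexOn ℝ S (fun h => ∏ t, F t h) :=
    convexOn_prod Finset.univ F S (convex_Iic 1) (fun t _ => hF_conv t)
      (fun t _ => hF_mono t) (fun t _ => hF_pos t)
  -- the points
  set y : Fin n → (Fin n → ℝ) := fun i => Function.update x i (-(x i)) with hy
  have hy_pm : ∀ i, ∀ j, y i j = 1 ∨ y i j = -1 := by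
    intro i j
    rcases eq_or_ne j i with rfl | hne
    · simp only [hy, Function.update_self]
      rcases hx j with h | h <;> simp [h]
    · simp only [hy, Function.update_of_ne hne]; exact hx j
  have hp_mem : ∀ i : Fin n, H (y i) / Estar ∈ S := by
    intro i
    have := hEstar_min (y i) (hy_pm i)
    simp only [Set.mem_Iic, hS]
    rw [div_le_iff_of_neg hEstar_neg]
    linarith
  have hnR : (0 : ℝ) < (n : ℝ) := by exact_mod_cast hn
  -- Jensen
  have hw0 : ∀ i ∈ (Finset.univ : Finset (Fin n)), (0:ℝ) ≤ 1 / (n:ℝ) := fun _ _ => by positivity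
  have hw1 : ∑ _i : Fin n, (1 / (n:ℝ)) = 1 := by
    simp [Finset.sum_const, mul_comm]
    field_simp
  have hjensen := hProd.map_sum_le hw0 hw1 (fun i _ => hp_mem i)
  simp only [smul_eq_mul, hy] at hjensen
  -- identify the average
  have havg : ∑ i : Fin n, (1 / (n:ℝ)) * (H (Function.update x i (-(x i))) / Estar)
      = (1 - α) * H x / Estar := by
    rw [← hdep x hx, Finset.mul_sum, Finset.sum_div]
    apply Finset.sum_congr rfl
    intro i _
    ring
  rw [havg] at hjensen
  rw [ge_iff_le]
  calc ∏ t, -g (-(c t * (1 - α) * H x / Estar))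
      = ∏ t, F t ((1 - α) * H x / Estar) := by
        apply Finset.prod_congr rfl
        intro t _
        have h1 : c t * (1 - α) * H x / Estar = c t * ((1 - α) * H x / Estar) := by ring
        simp only [hF, hf, h1]
    _ ≤ ∑ i, 1 / (n:ℝ) * ∏ t, F t (H (Function.update x i (-(x i))) / Estar) := hjensen
    _ = 1 / (n:ℝ) * ∑ i, ∏ t, -g (-(c t * H (Function.update x i (-(x i))) / Estar)) := by
        rw [Finset.mul_sum]
        apply Finset.sum_congr rfl
        intro i _
        congr 1
        apply Finset.prod_congr rfl
        intro t _
        simp only [hF, hf, mul_div_assoc]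
end

section
/- Define τ⁻¹(y) = H₂(½ - ½√(1-y²)) for y ∈ [0,1], where H₂(q) = -q·log₂ q - (1-q)·log₂(1-q) is the binary entropy. Then τ⁻¹ is convex on [0,1] and satisfies τ⁻¹(y) ≥ 1 + (y-1)/ln 2 for all y ∈ [0,1]. -/
/-- Binary entropy with base-2 logarithm (junk values at 0 and 1 are fine,
since `Real.logb 2 0 = 0`). -/
noncomputable def binEnt (q : ℝ) : ℝ := -q * Real.logb 2 q - (1 - q) * Real.logb 2 (1 - q)

/-- `τ⁻¹(y) = H₂(1/2 - √(1-y²)/2)`. -/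
noncomputable def tauInv (y : ℝ) : ℝ := binEnt (1 / 2 - Real.sqrt (1 - y ^ 2) / 2)

lemma binEnt_eq : binEnt = fun q => (-(q * Real.log q) - (1 - q) * Real.log (1 - q)) / Real.log 2 := by
  funext q; unfold binEnt Real.logb; ring

lemma continuous_binEnt : Continuous binEnt := by
  rw [binEnt_eq]
  exact ((Real.continuous_mul_log.neg).sub
    (Real.continuous_mul_log.comp (continuous_const.sub continuous_id))).div_const _

lemma continuous_tauInv : Continuous tauInv := by
  have h : tauInv = binEnt ∘ fun y => 1 / 2 - Real.sqrt (1 - y ^ 2) / 2 := rfl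
  rw [h]
  exact continuous_binEnt.comp (continuous_const.sub
    ((Real.continuous_sqrt.comp (continuous_const.sub (continuous_pow 2))).div_const 2))

lemma hasDerivAt_binEnt {q : ℝ} (h0 : 0 < q) (h1 : q < 1) :
    HasDerivAt binEnt ((Real.log (1 - q) - Real.log q) / Real.log 2) q := by
  rw [binEnt_eq]
  have h1' : (0:ℝ) < 1 - q := by linarith
  have A : HasDerivAt (fun q : ℝ => q * Real.log q) (Real.log q + 1) q :=
    Real.hasDerivAt_mul_log (ne_of_gt h0)
  have B : HasDerivAt (fun q : ℝ => (1 - q) * Real.log (1 - q)) ((Real.log (1 - q) + 1) * (-1)) q :=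
    (Real.hasDerivAt_mul_log (ne_of_gt h1')).comp q ((hasDerivAt_id q).const_sub 1)
  have := (A.neg.sub B).div_const (Real.log 2)
  refine this.congr_deriv (Eq.symm ?_)
  ring

lemma hasDerivAt_sqrt1my2 {y : ℝ} (hy2 : 0 < 1 - y ^ 2) :
    HasDerivAt (fun y : ℝ => Real.sqrt (1 - y ^ 2)) (-y / Real.sqrt (1 - y ^ 2)) y := by
  have hin : HasDerivAt (fun y : ℝ => 1 - y ^ 2) (-(2 * y)) y := by
    simpa using ((hasDerivAt_pow 2 y).const_sub 1)
  have := hin.sqrt (ne_of_gt hy2)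
  convert this using 1
  rw [neg_div, neg_div, mul_div_mul_left _ _ (two_ne_zero)]

/-- The derivative of `tauInv` on `(0,1)`. -/
noncomputable def tauD (y : ℝ) : ℝ :=
  y * (Real.log (1 + Real.sqrt (1 - y ^ 2)) - Real.log (1 - Real.sqrt (1 - y ^ 2))) /
    (2 * Real.sqrt (1 - y ^ 2) * Real.log 2)

lemma hasDerivAt_tauInv {y : ℝ} (h0 : 0 < y) (h1 : y < 1) : HasDerivAt tauInv (tauD y) y := by
  have hy2 : (0:ℝ) < 1 - y ^ 2 := by nlinarith
  set z := Real.sqrt (1 - y ^ 2) with hzdef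
  have hz0 : 0 < z := Real.sqrt_pos.mpr hy2
  have hzsq : z ^ 2 = 1 - y ^ 2 := Real.sq_sqrt hy2.le
  have hz1 : z < 1 := by nlinarith
  have hp : HasDerivAt (fun y : ℝ => 1 / 2 - Real.sqrt (1 - y ^ 2) / 2) (y / (2 * z)) y := by
    have := ((hasDerivAt_sqrt1my2 hy2).div_const 2).const_sub (1/2)
    refine this.congr_deriv (Eq.symm ?_)
    rw [← hzdef]
    field_simp
  have hq0 : 0 < 1 / 2 - z / 2 := by linarith
  have hq1 : 1 / 2 - z / 2 < 1 := by linarith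
  have hcomp := (hasDerivAt_binEnt hq0 hq1).comp y hp
  have hfun : tauInv = binEnt ∘ fun y => 1 / 2 - Real.sqrt (1 - y ^ 2) / 2 := rfl
  rw [hfun]
  refine hcomp.congr_deriv (Eq.symm ?_)
  have e1 : 1 - (1 / 2 - z / 2) = (1 + z) / 2 := by ring
  have e2 : (1 / 2 - z / 2 : ℝ) = (1 - z) / 2 := by ring
  rw [e1, e2, Real.log_div (by linarith) two_ne_zero, Real.log_div (by linarith) two_ne_zero]
  unfold tauD
  rw [← hzdef]
  have hl2 : Real.log 2 ≠ 0 := by positivity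
  field_simp
  ring

lemma hasDerivAt_L {z : ℝ} (h0 : -1 < z) (h1 : z < 1) :
    HasDerivAt (fun z : ℝ => Real.log (1 + z) - Real.log (1 - z)) ((1 + z)⁻¹ + (1 - z)⁻¹) z := by
  have hp : (0:ℝ) < 1 + z := by linarith
  have hm : (0:ℝ) < 1 - z := by linarith
  have A : HasDerivAt (fun z : ℝ => Real.log (1 + z)) ((1 + z)⁻¹ * 1) z :=
    (Real.hasDerivAt_log (ne_of_gt hp)).comp z ((hasDerivAt_id z).const_add 1)
  have B : HasDerivAt (fun z : ℝ => Real.log (1 - z)) ((1 - z)⁻¹ * (-1)) z :=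
    (Real.hasDerivAt_log (ne_of_gt hm)).comp z ((hasDerivAt_id z).const_sub 1)
  have := A.sub B
  refine this.congr_deriv (Eq.symm ?_)
  ring

lemma lemA : ∀ z ∈ Set.Ico (0:ℝ) 1, 2 * z ≤ Real.log (1 + z) - Real.log (1 - z) := by
  set G : ℝ → ℝ := fun z => Real.log (1 + z) - Real.log (1 - z) - 2 * z with hG
  have hd : ∀ z : ℝ, -1 < z → z < 1 → HasDerivAt G ((1 + z)⁻¹ + (1 - z)⁻¹ - 2) z := by
    intro z hz1 hz2
    have h2 : HasDerivAt (fun z : ℝ => 2 * z) 2 z := by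
      simpa using (hasDerivAt_id z).const_mul (2:ℝ)
    exact (hasDerivAt_L hz1 hz2).sub h2
  have hmono : MonotoneOn G (Set.Ico (0:ℝ) 1) := by
    apply monotoneOn_of_deriv_nonneg (convex_Ico 0 1)
    · intro z hz
      exact (hd z (by linarith [hz.1]) hz.2).continuousAt.continuousWithinAt
    · rw [interior_Ico]
      intro z hz
      exact (hd z (by linarith [hz.1]) hz.2).differentiableAt.differentiableWithinAt
    · rw [interior_Ico]
      intro z hz
      rw [(hd z (by linarith [hz.1]) hz.2).deriv]
      have hp : (0:ℝ) < 1 + z := by linarith [hz.1]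
      have hm : (0:ℝ) < 1 - z := by linarith [hz.2]
      have e : (1 + z)⁻¹ + (1 - z)⁻¹ - 2 = (2 * z ^ 2) / ((1 + z) * (1 - z)) := by
        field_simp
        ring
      rw [e]; positivity
  intro z hz
  have := hmono ⟨le_refl 0, by norm_num⟩ hz hz.1
  simp only [hG] at this
  norm_num at this
  linarith

lemma lemB : ∀ z ∈ Set.Ico (0:ℝ) 1,
    Real.log (1 + z) - Real.log (1 - z) ≤ 2 * (z / Real.sqrt (1 - z ^ 2)) := by
  set H : ℝ → ℝ := fun z => 2 * (z / Real.sqrt (1 - z ^ 2)) - (Real.log (1 + z) - Real.log (1 - z)) with hH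
  have hd : ∀ z ∈ Set.Ico (0:ℝ) 1, HasDerivAt H
      (2 * ((1 * Real.sqrt (1 - z ^ 2) - z * (-z / Real.sqrt (1 - z ^ 2))) / Real.sqrt (1 - z ^ 2) ^ 2)
        - ((1 + z)⁻¹ + (1 - z)⁻¹)) z := by
    intro z hz
    have hz2 : (0:ℝ) < 1 - z ^ 2 := by nlinarith [hz.1, hz.2]
    have hs0 : Real.sqrt (1 - z ^ 2) ≠ 0 := ne_of_gt (Real.sqrt_pos.mpr hz2)
    have hdiv : HasDerivAt (fun z : ℝ => z / Real.sqrt (1 - z ^ 2))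
        ((1 * Real.sqrt (1 - z ^ 2) - z * (-z / Real.sqrt (1 - z ^ 2))) / Real.sqrt (1 - z ^ 2) ^ 2) z :=
      (hasDerivAt_id z).div (hasDerivAt_sqrt1my2 hz2) hs0
    exact (hdiv.const_mul 2).sub (hasDerivAt_L (by linarith [hz.1]) hz.2)
  have hmono : MonotoneOn H (Set.Ico (0:ℝ) 1) := by
    apply monotoneOn_of_deriv_nonneg (convex_Ico 0 1)
    · intro z hz
      exact (hd z hz).continuousAt.continuousWithinAt
    · rw [interior_Ico]
      intro z hz
      exact (hd z ⟨hz.1.le, hz.2⟩).differentiableAt.differentiableWithinAt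
    · rw [interior_Ico]
      intro z hz
      rw [(hd z ⟨hz.1.le, hz.2⟩).deriv]
      have hz2 : (0:ℝ) < 1 - z ^ 2 := by nlinarith [hz.1, hz.2]
      set s := Real.sqrt (1 - z ^ 2) with hs
      have hs0 : 0 < s := Real.sqrt_pos.mpr hz2
      have hssq : s ^ 2 = 1 - z ^ 2 := Real.sq_sqrt hz2.le
      have hs1 : s ≤ 1 := by nlinarith
      have e1 : 1 * s - z * (-z / s) = 1 / s := by
        field_simp
        nlinarith
      have e2 : (1 + z)⁻¹ + (1 - z)⁻¹ = 2 / s ^ 2 := by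
        rw [hssq]
        have hp : (0:ℝ) < 1 + z := by linarith [hz.1]
        have hm : (0:ℝ) < 1 - z := by linarith [hz.2]
        field_simp
        ring
      rw [e1, e2]
      have e3 : 2 * (1 / s / s ^ 2) - 2 / s ^ 2 = 2 * (1 - s) / s ^ 3 := by
        field_simp
      rw [e3]
      apply div_nonneg _ (by positivity)
      nlinarith
  intro z hz
  have := hmono ⟨le_refl 0, by norm_num⟩ hz hz.1
  simp only [hH] at this
  norm_num at this
  linarith

/-- `tauD y` viewed as a function of `z = √(1-y²)`. -/
noncomputable def Fa (z : ℝ) : ℝ :=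
  Real.sqrt (1 - z ^ 2) / z * (Real.log (1 + z) - Real.log (1 - z)) / (2 * Real.log 2)

lemma Fa_anti : AntitoneOn Fa (Set.Ioo (0:ℝ) 1) := by
  have hd : ∀ z ∈ Set.Ioo (0:ℝ) 1, HasDerivAt Fa
      ((((-z / Real.sqrt (1 - z ^ 2)) * z - Real.sqrt (1 - z ^ 2) * 1) / z ^ 2
          * (Real.log (1 + z) - Real.log (1 - z))
        + Real.sqrt (1 - z ^ 2) / z * ((1 + z)⁻¹ + (1 - z)⁻¹)) / (2 * Real.log 2)) z := by
    intro z hz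
    have hz2 : (0:ℝ) < 1 - z ^ 2 := by nlinarith [hz.1, hz.2]
    have hdiv : HasDerivAt (fun z : ℝ => Real.sqrt (1 - z ^ 2) / z)
        (((-z / Real.sqrt (1 - z ^ 2)) * z - Real.sqrt (1 - z ^ 2) * 1) / z ^ 2) z :=
      (hasDerivAt_sqrt1my2 hz2).div (hasDerivAt_id z) (ne_of_gt hz.1)
    exact (hdiv.mul (hasDerivAt_L (by linarith [hz.1]) hz.2)).div_const _
  apply antitoneOn_of_deriv_nonpos (convex_Ioo 0 1)
  · intro z hz
    exact (hd z hz).continuousAt.continuousWithinAt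
  · rw [interior_Ioo]
    intro z hz
    exact (hd z hz).differentiableAt.differentiableWithinAt
  · rw [interior_Ioo]
    intro z hz
    rw [(hd z hz).deriv]
    have hz2 : (0:ℝ) < 1 - z ^ 2 := by nlinarith [hz.1, hz.2]
    set s := Real.sqrt (1 - z ^ 2) with hs
    have hs0 : 0 < s := Real.sqrt_pos.mpr hz2
    have hssq : s ^ 2 = 1 - z ^ 2 := Real.sq_sqrt hz2.le
    have hp : (0:ℝ) < 1 + z := by linarith [hz.1]
    have hm : (0:ℝ) < 1 - z := by linarith [hz.2]
    set L := Real.log (1 + z) - Real.log (1 - z) with hL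
    have hAL : 2 * z ≤ L := lemA z ⟨hz.1.le, hz.2⟩
    have e : (-z / s * z - s * 1) / z ^ 2 * L + s / z * ((1 + z)⁻¹ + (1 - z)⁻¹)
        = (2 * z - L) / (s * z ^ 2) := by
      have e2 : (1 + z)⁻¹ + (1 - z)⁻¹ = 2 / s ^ 2 := by
        rw [hssq]; field_simp; ring
      have h1 : -z / s * z - s * 1 = -(1/s) := by
        field_simp
        nlinarith [hssq]
      rw [h1, e2]
      have hz0' : z ≠ 0 := ne_of_gt hz.1
      have hs0' : s ≠ 0 := ne_of_gt hs0
      field_simp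
      ring
    rw [e]
    apply div_nonpos_of_nonpos_of_nonneg _ (by positivity)
    apply div_nonpos_of_nonpos_of_nonneg (by linarith) (by positivity)

lemma tauD_eq_Fa {y : ℝ} (h0 : 0 < y) (h1 : y < 1) : tauD y = Fa (Real.sqrt (1 - y ^ 2)) := by
  have hy2 : (0:ℝ) < 1 - y ^ 2 := by nlinarith
  set z := Real.sqrt (1 - y ^ 2) with hzdef
  have hz0 : 0 < z := Real.sqrt_pos.mpr hy2
  have hzsq : z ^ 2 = 1 - y ^ 2 := Real.sq_sqrt hy2.le
  have hyz : Real.sqrt (1 - z ^ 2) = y := by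
    rw [hzsq]
    have : (1 : ℝ) - (1 - y ^ 2) = y ^ 2 := by ring
    rw [this, Real.sqrt_sq h0.le]
  unfold tauD Fa
  rw [← hzdef, hyz]
  have hl2 : Real.log 2 ≠ 0 := by positivity
  field_simp

lemma z_mem {y : ℝ} (h0 : 0 < y) (h1 : y < 1) : Real.sqrt (1 - y ^ 2) ∈ Set.Ioo (0:ℝ) 1 := by
  have hy2 : (0:ℝ) < 1 - y ^ 2 := by nlinarith
  have hz0 : 0 < Real.sqrt (1 - y ^ 2) := Real.sqrt_pos.mpr hy2
  have hzsq : Real.sqrt (1 - y ^ 2) ^ 2 = 1 - y ^ 2 := Real.sq_sqrt hy2.le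
  exact ⟨hz0, by nlinarith⟩

lemma tauD_mono : MonotoneOn tauD (Set.Ioo (0:ℝ) 1) := by
  intro a ha b hb hab
  rw [tauD_eq_Fa ha.1 ha.2, tauD_eq_Fa hb.1 hb.2]
  apply Fa_anti (z_mem hb.1 hb.2) (z_mem ha.1 ha.2)
  exact Real.sqrt_le_sqrt (by nlinarith [ha.1])

lemma tauD_le {y : ℝ} (h0 : 0 < y) (h1 : y < 1) : tauD y ≤ 1 / Real.log 2 := by
  have hy2 : (0:ℝ) < 1 - y ^ 2 := by nlinarith
  set z := Real.sqrt (1 - y ^ 2) with hzdef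
  have hz0 : 0 < z := Real.sqrt_pos.mpr hy2
  have hzsq : z ^ 2 = 1 - y ^ 2 := Real.sq_sqrt hy2.le
  have hz1 : z < 1 := by nlinarith
  have hyz : Real.sqrt (1 - z ^ 2) = y := by
    rw [hzsq]
    have : (1 : ℝ) - (1 - y ^ 2) = y ^ 2 := by ring
    rw [this, Real.sqrt_sq h0.le]
  have hB := lemB z ⟨hz0.le, hz1⟩
  rw [hyz] at hB
  have h1' : y * (Real.log (1 + z) - Real.log (1 - z)) ≤ 2 * z := by
    calc y * (Real.log (1 + z) - Real.log (1 - z)) ≤ y * (2 * (z / y)) := by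
          apply mul_le_mul_of_nonneg_left hB h0.le
      _ = 2 * z := by field_simp
  have hl2 : (0:ℝ) < Real.log 2 := Real.log_pos (by norm_num)
  unfold tauD
  rw [← hzdef]
  calc y * (Real.log (1 + z) - Real.log (1 - z)) / (2 * z * Real.log 2)
      ≤ 2 * z / (2 * z * Real.log 2) := by gcongr
    _ = 1 / Real.log 2 := by field_simp

lemma tauInv_one : tauInv 1 = 1 := by
  unfold tauInv
  norm_num
  rw [binEnt_eq]
  norm_num
  rw [show (1/2 : ℝ) = 2⁻¹ by norm_num, Real.log_inv]
  have hl2 : Real.log 2 ≠ 0 := by positivity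
  field_simp
  norm_num

/-- `τ⁻¹` is convex on `[0,1]` and satisfies `τ⁻¹(y) ≥ 1 + (y-1)/ln 2`. -/
theorem tauInv_convex_and_lb :
    ConvexOn ℝ (Set.Icc 0 1) tauInv ∧
      ∀ y ∈ Set.Icc (0 : ℝ) 1, tauInv y ≥ 1 + (y - 1) / Real.log 2 := by
  constructor
  · apply MonotoneOn.convexOn_of_deriv (convex_Icc 0 1) continuous_tauInv.continuousOn
    · rw [interior_Icc]
      intro y hy
      exact (hasDerivAt_tauInv hy.1 hy.2).differentiableAt.differentiableWithinAt
    · rw [interior_Icc]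
      intro a ha b hb hab
      rw [(hasDerivAt_tauInv ha.1 ha.2).deriv, (hasDerivAt_tauInv hb.1 hb.2).deriv]
      exact tauD_mono ha hb hab
  · set φ : ℝ → ℝ := fun y => tauInv y - (1 + (y - 1) / Real.log 2) with hφ
    have hanti : AntitoneOn φ (Set.Icc 0 1) := by
      apply antitoneOn_of_deriv_nonpos (convex_Icc 0 1)
      · exact (continuous_tauInv.sub (by continuity)).continuousOn
      · rw [interior_Icc]
        intro y hy
        have hlin : HasDerivAt (fun y : ℝ => 1 + (y - 1) / Real.log 2) (1 / Real.log 2) y := by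
          have := (((hasDerivAt_id y).sub_const 1).div_const (Real.log 2)).const_add 1
          simpa using this
        exact ((hasDerivAt_tauInv hy.1 hy.2).sub hlin).differentiableAt.differentiableWithinAt
      · rw [interior_Icc]
        intro y hy
        have hlin : HasDerivAt (fun y : ℝ => 1 + (y - 1) / Real.log 2) (1 / Real.log 2) y := by
          have := (((hasDerivAt_id y).sub_const 1).div_const (Real.log 2)).const_add 1
          simpa using this
        rw [show deriv φ y = _ from ((hasDerivAt_tauInv hy.1 hy.2).sub hlin).deriv]
        have := tauD_le hy.1 hy.2
        linarith
    intro y hy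
    have h1 : φ 1 ≤ φ y := hanti hy (by constructor <;> norm_num) hy.2
    simp only [hφ] at h1
    have h2 : tauInv 1 - (1 + ((1:ℝ) - 1) / Real.log 2) = 0 := by
      rw [tauInv_one]; ring
    have := h1
    rw [h2] at this
    linarith
end

section
/- For the second derivative computation: with q(y) = (1 - √(1-y²))/2 for 0 < y < 1, one has d²/dy²[H₂(q(y))] = -1/(ln 2 · (1-y²)) + (1/(2 ln 2)) · ln((1+√(1-y²))/(1-√(1-y²))) / (1-y²)^{3/2}, and this quantity is non-negative. -/
lemma sfacts (t : ℝ) (h0 : 0 < t) (h1 : t < 1) :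
    0 < 1 - t^2 ∧ Real.sqrt (1 - t^2) ^ 2 = 1 - t^2 ∧ 0 < Real.sqrt (1 - t^2) ∧
      Real.sqrt (1 - t^2) < 1 := by
  have h : 0 < 1 - t^2 := by nlinarith
  have h2 : Real.sqrt (1 - t^2) ^ 2 = 1 - t^2 := Real.sq_sqrt h.le
  have h3 : 0 < Real.sqrt (1 - t^2) := Real.sqrt_pos.2 h
  have h4 : Real.sqrt (1 - t^2) < 1 := by
    nlinarith [h2, h3]
  exact ⟨h, h2, h3, h4⟩

lemma hasDerivAt_s (t : ℝ) (h0 : 0 < t) (h1 : t < 1) :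
    HasDerivAt (fun t : ℝ => Real.sqrt (1 - t^2)) (-(t / Real.sqrt (1 - t^2))) t := by
  obtain ⟨h, h2, h3, _⟩ := sfacts t h0 h1
  have inner : HasDerivAt (fun t : ℝ => 1 - t^2) (-(2*t)) t := by
    simpa using ((hasDerivAt_pow 2 t).const_sub 1)
  have := (Real.hasDerivAt_sqrt h.ne').comp t inner
  refine this.congr_deriv ?_
  field_simp

noncomputable def gfun (t : ℝ) : ℝ :=
  (Real.log (1 + Real.sqrt (1 - t^2)) - Real.log (1 - Real.sqrt (1 - t^2)))
    * (t / Real.sqrt (1 - t^2)) * (2 * Real.log 2)⁻¹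

lemma hasDerivAt_f (t : ℝ) (h0 : 0 < t) (h1 : t < 1) :
    HasDerivAt (fun t => binEnt ((1 - Real.sqrt (1 - t ^ 2)) / 2)) (gfun t) t := by
  obtain ⟨h, h2, h3, h4⟩ := sfacts t h0 h1
  set s := Real.sqrt (1 - t^2) with hs
  have hq : HasDerivAt (fun t : ℝ => (1 - Real.sqrt (1 - t^2)) / 2)
      (-(-(t / s)) / 2) t := ((hasDerivAt_s t h0 h1).const_sub 1).div_const 2
  have hq1 : (0:ℝ) < (1 - s) / 2 := by linarith
  have hq2 : (0:ℝ) < (1 + s) / 2 := by linarith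
  have hA : HasDerivAt (fun t : ℝ => ((1 - Real.sqrt (1 - t^2)) / 2) *
      Real.log ((1 - Real.sqrt (1 - t^2)) / 2))
      ((Real.log ((1 - s)/2) + 1) * (- -(t / s) / 2)) t :=
    by have := (Real.hasDerivAt_mul_log hq1.ne').comp t hq; exact this
  have hq' : HasDerivAt (fun t : ℝ => 1 - (1 - Real.sqrt (1 - t^2)) / 2)
      (-(- -(t / s) / 2)) t := hq.const_sub 1
  have hB : HasDerivAt (fun t : ℝ => (1 - (1 - Real.sqrt (1 - t^2)) / 2) *
      Real.log (1 - (1 - Real.sqrt (1 - t^2)) / 2))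
      ((Real.log (1 - (1 - s)/2) + 1) * (-(- -(t / s) / 2))) t := by
    have h1q : (1:ℝ) - (1 - s)/2 ≠ 0 := ne_of_gt (by linarith)
    exact (Real.hasDerivAt_mul_log h1q).comp t hq'
  have hfull : HasDerivAt (fun t : ℝ =>
      -(((1 - Real.sqrt (1 - t^2)) / 2) * Real.log ((1 - Real.sqrt (1 - t^2)) / 2)) / Real.log 2
      - ((1 - (1 - Real.sqrt (1 - t^2)) / 2) * Real.log (1 - (1 - Real.sqrt (1 - t^2)) / 2)) / Real.log 2)
      ((-((Real.log ((1 - s)/2) + 1) * (- -(t / s) / 2))) / Real.log 2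
        - ((Real.log (1 - (1 - s)/2) + 1) * (-(- -(t / s) / 2))) / Real.log 2) t :=
    (hA.neg.div_const _).sub (hB.div_const _)
  have hfeq : (fun t => binEnt ((1 - Real.sqrt (1 - t ^ 2)) / 2)) = (fun t : ℝ =>
      -(((1 - Real.sqrt (1 - t^2)) / 2) * Real.log ((1 - Real.sqrt (1 - t^2)) / 2)) / Real.log 2
      - ((1 - (1 - Real.sqrt (1 - t^2)) / 2) * Real.log (1 - (1 - Real.sqrt (1 - t^2)) / 2)) / Real.log 2) := by
    funext u
    simp only [binEnt, Real.logb]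
    ring
  rw [hfeq]
  convert hfull using 1
  have l2 : Real.log 2 ≠ 0 := ne_of_gt (Real.log_pos (by norm_num))
  have e1 : Real.log ((1 - s)/2) = Real.log (1 - s) - Real.log 2 :=
    Real.log_div (by linarith) (by norm_num)
  have e2 : (1:ℝ) - (1 - s)/2 = (1 + s)/2 := by ring
  have e3 : Real.log ((1 + s)/2) = Real.log (1 + s) - Real.log 2 :=
    Real.log_div (by linarith) (by norm_num)
  rw [gfun, e2, e3, e1]
  field_simp
  ring


lemma hasDerivAt_g (y : ℝ) (h0 : 0 < y) (h1 : y < 1) :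
    HasDerivAt gfun
      ((Real.log (1 + Real.sqrt (1 - y^2)) - Real.log (1 - Real.sqrt (1 - y^2))
          - 2 * Real.sqrt (1 - y^2))
        / (2 * Real.log 2 * Real.sqrt (1 - y^2) ^ 3)) y := by
  obtain ⟨h, h2, h3, h4⟩ := sfacts y h0 h1
  set s := Real.sqrt (1 - y^2) with hs
  have hsne : s ≠ 0 := h3.ne'
  have h1s : (1:ℝ) - s ≠ 0 := ne_of_gt (by linarith)
  have h1s' : (1:ℝ) + s ≠ 0 := by positivity
  have hyne : y ≠ 0 := h0.ne'
  have l2 : Real.log 2 ≠ 0 := ne_of_gt (Real.log_pos (by norm_num))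
  have hsd := hasDerivAt_s y h0 h1
  have hL1 : HasDerivAt (fun t : ℝ => Real.log (1 + Real.sqrt (1 - t^2)))
      ((1 + s)⁻¹ * (-(y / s))) y :=
    by have := (Real.hasDerivAt_log h1s').comp y (hsd.const_add 1); exact this
  have hL2 : HasDerivAt (fun t : ℝ => Real.log (1 - Real.sqrt (1 - t^2)))
      ((1 - s)⁻¹ * (-(-(y / s)))) y :=
    by have := (Real.hasDerivAt_log h1s).comp y (hsd.const_sub 1); exact this
  have hL12 : HasDerivAt (fun t : ℝ => Real.log (1 + Real.sqrt (1 - t^2))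
      - Real.log (1 - Real.sqrt (1 - t^2))) (-(2/(y*s))) y := by
    refine (hL1.sub hL2).congr_deriv ?_
    field_simp
    linear_combination (-2) * h2
  have hdiv : HasDerivAt (fun t : ℝ => t / Real.sqrt (1 - t^2)) (1 / s^3) y := by
    have := (hasDerivAt_id y).div hsd h3.ne'
    refine this.congr_deriv ?_
    field_simp
    simp only [id_eq, ← hs]
    linear_combination (s^3) * h2
  have hprod := (hL12.mul hdiv).mul_const (2 * Real.log 2)⁻¹
  have hgeq : gfun = fun t => (Real.log (1 + Real.sqrt (1 - t^2))
      - Real.log (1 - Real.sqrt (1 - t^2))) * (t / Real.sqrt (1 - t^2)) * (2 * Real.log 2)⁻¹ := by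
    funext u; rw [gfun]
  rw [hgeq]
  refine hprod.congr_deriv ?_
  field_simp
  ring

lemma key_ineq (s : ℝ) (h0 : 0 ≤ s) (h1 : s < 1) :
    2 * s ≤ Real.log (1 + s) - Real.log (1 - s) := by
  set F : ℝ → ℝ := fun x => Real.log (1 + x) - Real.log (1 - x) - 2 * x with hF
  have hderiv : ∀ x ∈ Set.Ioo (0:ℝ) s, HasDerivAt F ((1+x)⁻¹ + (1-x)⁻¹ - 2) x := by
    intro x hx
    have hx0 : (0:ℝ) < x := hx.1
    have hxs : x < s := hx.2
    have hxp : (0:ℝ) < 1 + x := by linarith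
    have hxm : (0:ℝ) < 1 - x := by linarith
    have d1 : HasDerivAt (fun x : ℝ => Real.log (1 + x)) ((1+x)⁻¹ * 1) x :=
      (Real.hasDerivAt_log hxp.ne').comp x ((hasDerivAt_id x).const_add 1)
    have d2 : HasDerivAt (fun x : ℝ => Real.log (1 - x)) ((1-x)⁻¹ * (-1)) x :=
      (Real.hasDerivAt_log hxm.ne').comp x ((hasDerivAt_id x).const_sub 1)
    have d3 : HasDerivAt (fun x : ℝ => 2 * x) 2 x := by
      simpa using (hasDerivAt_id x).const_mul 2
    have := (d1.sub d2).sub d3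
    refine this.congr_deriv ?_
    ring
  have hmono : MonotoneOn F (Set.Icc 0 s) := by
    apply monotoneOn_of_deriv_nonneg (convex_Icc 0 s)
    · apply ContinuousOn.sub (ContinuousOn.sub ?_ ?_) (by fun_prop)
      · apply Real.continuousOn_log.comp (by fun_prop)
        intro x hx
        simp only [Set.mem_Icc] at hx
        simp only [Set.mem_compl_iff, Set.mem_singleton_iff]
        intro hc; linarith [hx.1]
      · apply Real.continuousOn_log.comp (by fun_prop)
        intro x hx
        simp only [Set.mem_Icc] at hx
        simp only [Set.mem_compl_iff, Set.mem_singleton_iff]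
        intro hc; linarith [hx.2, h1]
    · rw [interior_Icc]
      intro x hx
      exact (hderiv x hx).differentiableAt.differentiableWithinAt
    · rw [interior_Icc]
      intro x hx
      rw [(hderiv x hx).deriv]
      have hx0 : (0:ℝ) < x := hx.1
      have hxm : (0:ℝ) < 1 - x := by linarith [hx.2, h1]
      have hxp : (0:ℝ) < 1 + x := by linarith
      rw [sub_nonneg, inv_add_inv hxp.ne' hxm.ne']
      rw [le_div_iff₀ (by positivity)]
      nlinarith
  rcases eq_or_lt_of_le h0 with rfl | hs0
  · simp
  · have hms := hmono (Set.left_mem_Icc.2 h0) (Set.right_mem_Icc.2 h0) h0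
    have hF0 : F 0 = 0 := by simp [hF]
    have hFs : F s = Real.log (1 + s) - Real.log (1 - s) - 2 * s := rfl
    linarith [hms]

/-- With `q(y) = (1 - √(1-y²))/2` for `0 < y < 1`, the second derivative of
`y ↦ H₂(q(y))` equals
`-1/(ln 2 (1-y²)) + (1/(2 ln 2)) ln((1+√(1-y²))/(1-√(1-y²)))/(1-y²)^{3/2}`,
and this quantity is non-negative. -/
theorem second_deriv_binEnt_q (y : ℝ) (hy0 : 0 < y) (hy1 : y < 1) :
    deriv (deriv (fun t => binEnt ((1 - Real.sqrt (1 - t ^ 2)) / 2))) y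
        = -1 / (Real.log 2 * (1 - y ^ 2))
          + (1 / (2 * Real.log 2))
            * Real.log ((1 + Real.sqrt (1 - y ^ 2)) / (1 - Real.sqrt (1 - y ^ 2)))
            / (1 - y ^ 2) ^ ((3 : ℝ) / 2) ∧
      0 ≤ -1 / (Real.log 2 * (1 - y ^ 2))
          + (1 / (2 * Real.log 2))
            * Real.log ((1 + Real.sqrt (1 - y ^ 2)) / (1 - Real.sqrt (1 - y ^ 2)))
            / (1 - y ^ 2) ^ ((3 : ℝ) / 2) := by
  obtain ⟨h, h2, h3, h4⟩ := sfacts y hy0 hy1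
  set s := Real.sqrt (1 - y^2) with hs
  have l2 : (0:ℝ) < Real.log 2 := Real.log_pos (by norm_num)
  have h1s : (0:ℝ) < 1 - s := by linarith
  have h1s' : (0:ℝ) < 1 + s := by linarith
  -- rewrite rpow as s^3
  have hrpow : (1 - y ^ 2) ^ ((3 : ℝ) / 2) = s ^ 3 := by
    rw [show ((3:ℝ)/2) = (1/2) * 3 by norm_num, Real.rpow_mul h.le, ← Real.sqrt_eq_rpow,
      ← hs]
    exact_mod_cast Real.rpow_natCast s 3
  have hlogdiv : Real.log ((1 + s) / (1 - s)) = Real.log (1 + s) - Real.log (1 - s) :=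
    Real.log_div h1s'.ne' h1s.ne'
  have key := key_ineq s h3.le h4
  -- target value equality
  have hval : -1 / (Real.log 2 * (1 - y ^ 2))
          + (1 / (2 * Real.log 2)) * Real.log ((1 + s) / (1 - s)) / (1 - y ^ 2) ^ ((3 : ℝ) / 2)
        = (Real.log (1 + s) - Real.log (1 - s) - 2 * s) / (2 * Real.log 2 * s ^ 3) := by
    rw [hrpow, hlogdiv, ← h2]
    field_simp
    ring
  constructor
  · -- derivative computation
    have hev : deriv (fun t => binEnt ((1 - Real.sqrt (1 - t ^ 2)) / 2)) =ᶠ[nhds y] gfun := by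
      filter_upwards [Ioo_mem_nhds hy0 hy1] with t ht
      exact (hasDerivAt_f t ht.1 ht.2).deriv
    rw [hev.deriv_eq, (hasDerivAt_g y hy0 hy1).deriv, ← hs, hval]
  · rw [hval]
    apply div_nonneg (by linarith) (by positivity)
end

section
/- For a two-level statistical mechanics system with Ω₁ = 2^{(1-γ)n} states at energy -1 and Ω₂ = 2^n states at energy 0, in the Gibbs distribution with average energy U ∈ (-1, 0), the entropy (base 2) equals S̄(U) = n(1 + γU) + H₂(-U), where H₂ is the binary entropy. -/
/-- For the two-level system with `Ω₁ = 2^{(1-γ)n}` states at energy `-1` and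
`Ω₂ = 2^n` states at energy `0`, the Gibbs entropy at average energy `U ∈ (-1,0)`
equals `n(1 + γU) + H₂(-U)`. -/
theorem two_level_entropy (n : ℕ) (γ U β Ω₁ Ω₂ : ℝ)
    (hΩ₁ : Ω₁ = (2 : ℝ) ^ ((1 - γ) * (n : ℝ))) (hΩ₂ : Ω₂ = (2 : ℝ) ^ (n : ℝ))
    (hU1 : -1 < U) (hU2 : U < 0)
    (hβ : -(Ω₁ * Real.exp β) / (Ω₁ * Real.exp β + Ω₂) = U) :
    -(Ω₁ * (Real.exp β / (Ω₁ * Real.exp β + Ω₂))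
          * Real.logb 2 (Real.exp β / (Ω₁ * Real.exp β + Ω₂))
        + Ω₂ * (Ω₁ * Real.exp β + Ω₂)⁻¹
          * Real.logb 2 (Ω₁ * Real.exp β + Ω₂)⁻¹)
      = (n : ℝ) * (1 + γ * U) + binEnt (-U) := by
  have hE : 0 < Real.exp β := Real.exp_pos β
  have h1 : (0:ℝ) < Ω₁ := hΩ₁ ▸ Real.rpow_pos_of_pos (by norm_num) _
  have h2 : (0:ℝ) < Ω₂ := hΩ₂ ▸ Real.rpow_pos_of_pos (by norm_num) _
  set Z := Ω₁ * Real.exp β + Ω₂ with hZdef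
  have hZ : 0 < Z := by positivity
  have hkey : Ω₁ * Real.exp β = -U * Z := by
    field_simp at hβ
    linarith [hβ]
  have hEZ : Real.exp β / Z = (-U) / Ω₁ := by
    rw [div_eq_div_iff hZ.ne' h1.ne']
    nlinarith [hkey]
  have hZinv : Z⁻¹ = (1 + U) / Ω₂ := by
    rw [eq_div_iff h2.ne']
    field_simp
    nlinarith [hkey]
  have hlog1 : Real.logb 2 Ω₁ = (1 - γ) * n := by
    rw [hΩ₁, Real.logb_rpow (by norm_num) (by norm_num)]
  have hlog2 : Real.logb 2 Ω₂ = n := by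
    rw [hΩ₂, Real.logb_rpow (by norm_num) (by norm_num)]
  have hUpos : (0:ℝ) < -U := by linarith
  have h1U : (0:ℝ) < 1 + U := by linarith
  rw [hEZ, hZinv, Real.logb_div hUpos.ne' h1.ne', Real.logb_div h1U.ne' h2.ne',
    hlog1, hlog2, binEnt]
  have e1 : Ω₁ * (-U / Ω₁) = -U := by field_simp
  have e2 : Ω₂ * ((1 + U) / Ω₂) = 1 + U := by field_simp
  rw [e1, e2]
  have : (1 : ℝ) - -U = 1 + U := by ring
  rw [this]
  ring
end

section
/- For a cost function H : {+1,-1}^n → ℝ with Σ_z H(z) = 0, whose values lie in [E*, (2^k - 1)·m] for m constraints each bounded above by 2^k - 1, and such that each variable participates in at most d constraints each changing H by at most 2^{k+1}·k·m/n under a single bit flip: the number C(E) of assignments z with H(z) ≤ E, for E < 0, satisfies C(E) ≤ 2^n · exp(-E²·n / (2^{2k+1}·k²·m²)). -/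
open Finset Real

private lemma flip_invol {n : ℕ} (i : Fin n) :
    Function.Involutive (fun z : Fin n → Bool => Function.update z i (!z i)) := by
  intro z; funext j
  by_cases h : j = i
  · subst h; simp
  · simp [Function.update_apply, h]

private lemma sum_flip {n : ℕ} (i : Fin n) (f : (Fin n → Bool) → ℝ) :
    ∑ z : Fin n → Bool, f (Function.update z i (!z i)) = ∑ z : Fin n → Bool, f z :=
  Function.Bijective.sum_comp (flip_invol i).bijective f

private lemma g_eq {n : ℕ} (i : Fin n) (f : (Fin n → Bool) → ℝ) (z : Fin n → Bool) :
    (f (Function.update z i true) + f (Function.update z i false)) / 2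
      = (f z + f (Function.update z i (!z i))) / 2 := by
  cases hzi : z i
  · rw [show Function.update z i false = z by rw [← hzi]; exact Function.update_eq_self i z]
    simp only [Bool.not_false]; ring
  · rw [show Function.update z i true = z by rw [← hzi]; exact Function.update_eq_self i z]
    simp only [Bool.not_true]

private lemma half_abs_le {x y c : ℝ} (hx : |x| ≤ c) (hy : |y| ≤ c) :
    |(x + y) / 2| ≤ c := by
  rw [abs_div, abs_two]
  have := abs_add_le x y
  linarith

private lemma pair_exp_bound {a b K : ℝ} (h : ((a - b) / 2) ^ 2 / 2 ≤ K) :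
    Real.exp a + Real.exp b ≤ 2 * Real.exp K * Real.exp ((a + b) / 2) := by
  have e1 : Real.exp ((a + b) / 2) * Real.exp ((a - b) / 2) = Real.exp a := by
    rw [← Real.exp_add]; congr 1; ring
  have e2 : Real.exp ((a + b) / 2) * Real.exp (-((a - b) / 2)) = Real.exp b := by
    rw [← Real.exp_add]; congr 1; ring
  have h1 : Real.exp a + Real.exp b
      = 2 * Real.exp ((a + b) / 2) * Real.cosh ((a - b) / 2) := by
    calc Real.exp a + Real.exp b
        = Real.exp ((a + b) / 2) * Real.exp ((a - b) / 2)
          + Real.exp ((a + b) / 2) * Real.exp (-((a - b) / 2)) := by rw [e1, e2]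
      _ = 2 * Real.exp ((a + b) / 2)
          * ((Real.exp ((a - b) / 2) + Real.exp (-((a - b) / 2))) / 2) := by ring
      _ = 2 * Real.exp ((a + b) / 2) * Real.cosh ((a - b) / 2) := by rw [Real.cosh_eq]
  have h2 : Real.cosh ((a - b) / 2) ≤ Real.exp K :=
    (Real.cosh_le_exp_half_sq _).trans (Real.exp_le_exp.2 h)
  rw [h1]
  calc 2 * Real.exp ((a + b) / 2) * Real.cosh ((a - b) / 2)
      ≤ 2 * Real.exp ((a + b) / 2) * Real.exp K := by
        have := Real.exp_pos ((a + b) / 2); nlinarith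
    _ = 2 * Real.exp K * Real.exp ((a + b) / 2) := by ring

private lemma hoeffding_cube {n : ℕ} (c t : ℝ) (hc : 0 ≤ c) (S : Finset (Fin n)) :
    ∀ f : (Fin n → Bool) → ℝ,
      (∑ z : Fin n → Bool, f z = 0) →
      (∀ z z' : Fin n → Bool, (∀ j ∈ S, z j = z' j) → f z = f z') →
      (∀ z : Fin n → Bool, ∀ i ∈ S, |f (Function.update z i (!z i)) - f z| ≤ c) →
      ∑ z : Fin n → Bool, Real.exp (t * f z)
        ≤ 2 ^ n * Real.exp (S.card * (t ^ 2 * c ^ 2 / 8)) := by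
  classical
  induction S using Finset.induction_on with
  | empty =>
    intro f hmean hdep _
    have hconst : ∀ z : Fin n → Bool, f z = f (fun _ => true) := fun z =>
      hdep z _ (by simp)
    have hcard : (Fintype.card (Fin n → Bool) : ℝ) = 2 ^ n := by
      simp [Fintype.card_fun]
    have : ∑ z : Fin n → Bool, f z = (2 ^ n : ℝ) * f (fun _ => true) := by
      rw [Finset.sum_congr rfl (fun z _ => hconst z), Finset.sum_const, nsmul_eq_mul]
      simp [Fintype.card_fun]
    have hf0 : f (fun _ => true) = 0 := by
      have h2 : (0:ℝ) < 2 ^ n := by positivity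
      nlinarith [this.symm.trans hmean]
    have : ∀ z : Fin n → Bool, Real.exp (t * f z) = 1 := by
      intro z; rw [hconst z, hf0]; simp
    rw [Finset.sum_congr rfl (fun z _ => this z)]
    simp [Fintype.card_fun]
  | @insert i S hiS ih =>
    intro f hmean hdep hflip
    set g : (Fin n → Bool) → ℝ :=
      fun z => (f (Function.update z i true) + f (Function.update z i false)) / 2 with hg
    -- g is the conditional average; key pointwise bound
    have hgz : ∀ z, g z = (f z + f (Function.update z i (!z i))) / 2 := fun z => g_eq i f z
    have hgmean : ∑ z : Fin n → Bool, g z = 0 := by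
      have h1 : ∀ z, g z = f z / 2 + f (Function.update z i (!z i)) / 2 := by
        intro z; rw [hgz z]; ring
      rw [Finset.sum_congr rfl fun z _ => h1 z, Finset.sum_add_distrib,
        ← Finset.sum_div, ← Finset.sum_div, sum_flip i f, hmean]
      norm_num
    have hgdep : ∀ z z' : Fin n → Bool, (∀ j ∈ S, z j = z' j) → g z = g z' := by
      intro z z' h
      have key : ∀ b, f (Function.update z i b) = f (Function.update z' i b) := by
        intro b
        refine hdep _ _ fun j hj => ?_
        rcases Finset.mem_insert.1 hj with rfl | hj
        · simp
        · have hji : j ≠ i := fun hji => hiS (hji ▸ hj)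
          simp [Function.update_apply, hji, h j hj]
      simp [hg, key true, key false]
    have hgflip : ∀ z : Fin n → Bool, ∀ j ∈ S, |g (Function.update z j (!z j)) - g z| ≤ c := by
      intro z j hj
      have hji : j ≠ i := fun hji => hiS (hji ▸ hj)
      have key : ∀ b, f (Function.update (Function.update z j (!z j)) i b)
          = f (Function.update (Function.update z i b) j (!(Function.update z i b) j)) := by
        intro b
        rw [Function.update_comm hji.symm]
        congr 2
        simp [Function.update_apply, hji]
      have h1 := hflip (Function.update z i true) j (Finset.mem_insert_of_mem hj)
      have h2 := hflip (Function.update z i false) j (Finset.mem_insert_of_mem hj)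
      rw [hg]
      simp only
      rw [key true, key false]
      have : (f (Function.update (Function.update z i true) j
              (!(Function.update z i true) j)) + f (Function.update (Function.update z i false) j
              (!(Function.update z i false) j))) / 2
          - (f (Function.update z i true) + f (Function.update z i false)) / 2
          = ((f (Function.update (Function.update z i true) j (!(Function.update z i true) j))
              - f (Function.update z i true))
            + (f (Function.update (Function.update z i false) j (!(Function.update z i false) j))
              - f (Function.update z i false))) / 2 := by ring
      rw [this]
      exact half_abs_le h1 h2
    have hK : ∀ z : Fin n → Bool,
        Real.exp (t * f z) + Real.exp (t * f (Function.update z i (!z i)))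
          ≤ 2 * Real.exp (t ^ 2 * c ^ 2 / 8) * Real.exp (t * g z) := by
      intro z
      have hdc : |f (Function.update z i (!z i)) - f z| ≤ c :=
        hflip z i (Finset.mem_insert_self i S)
      have h2 : (f (Function.update z i (!z i)) - f z) ^ 2 ≤ c ^ 2 := by
        nlinarith [abs_nonneg (f (Function.update z i (!z i)) - f z),
          sq_abs (f (Function.update z i (!z i)) - f z)]
      have h3 : t ^ 2 * (f (Function.update z i (!z i)) - f z) ^ 2 ≤ t ^ 2 * c ^ 2 :=
        mul_le_mul_of_nonneg_left h2 (sq_nonneg t)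
      have habs : ((t * f z - t * f (Function.update z i (!z i))) / 2) ^ 2 / 2
          ≤ t ^ 2 * c ^ 2 / 8 := by nlinarith [h3]
      have heq : (t * f z + t * f (Function.update z i (!z i))) / 2 = t * g z := by
        rw [hgz z]; ring
      rw [← heq]
      exact pair_exp_bound habs
    have hsum2 : (2 : ℝ) * ∑ z : Fin n → Bool, Real.exp (t * f z)
        = ∑ z : Fin n → Bool,
            (Real.exp (t * f z) + Real.exp (t * f (Function.update z i (!z i)))) := by
      rw [Finset.sum_add_distrib, sum_flip i (fun w => Real.exp (t * f w)), two_mul]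
    have hsum3 : ∑ z : Fin n → Bool,
          (Real.exp (t * f z) + Real.exp (t * f (Function.update z i (!z i))))
        ≤ ∑ z : Fin n → Bool, 2 * Real.exp (t ^ 2 * c ^ 2 / 8) * Real.exp (t * g z) :=
      Finset.sum_le_sum fun z _ => hK z
    have hih := ih g hgmean hgdep hgflip
    have hfin : ∑ z : Fin n → Bool, 2 * Real.exp (t ^ 2 * c ^ 2 / 8) * Real.exp (t * g z)
        = 2 * Real.exp (t ^ 2 * c ^ 2 / 8) * ∑ z : Fin n → Bool, Real.exp (t * g z) := by
      rw [Finset.mul_sum]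
    have hmain : (2 : ℝ) * ∑ z : Fin n → Bool, Real.exp (t * f z)
        ≤ 2 * Real.exp (t ^ 2 * c ^ 2 / 8)
          * (2 ^ n * Real.exp (S.card * (t ^ 2 * c ^ 2 / 8))) := by
      rw [hsum2]
      refine hsum3.trans ?_
      rw [hfin]
      have hp : (0 : ℝ) ≤ 2 * Real.exp (t ^ 2 * c ^ 2 / 8) := by positivity
      exact mul_le_mul_of_nonneg_left hih hp
    have hexp : Real.exp (t ^ 2 * c ^ 2 / 8) * Real.exp (S.card * (t ^ 2 * c ^ 2 / 8))
        = Real.exp (((S.card : ℝ) + 1) * (t ^ 2 * c ^ 2 / 8)) := by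
      rw [← Real.exp_add]; congr 1; ring
    have h4 : 2 * Real.exp (t ^ 2 * c ^ 2 / 8)
          * (2 ^ n * Real.exp (S.card * (t ^ 2 * c ^ 2 / 8)))
        = 2 * ((2 : ℝ) ^ n * Real.exp (((S.card : ℝ) + 1) * (t ^ 2 * c ^ 2 / 8))) := by
      rw [← hexp]; ring
    rw [Finset.card_insert_of_notMem hiS]
    push_cast
    linarith [hmain, h4.symm.le, h4.le]

/-- McDiarmid-type tail bound for a mean-zero MAX-k-CSP cost function with `m`
constraints whose single-bit-flip differences are at most `2^{k+1} k m / n`: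
for `E < 0`, the number of assignments of cost at most `E` satisfies
`C(E) ≤ 2^n exp(-E² n / (2^{2k+1} k² m²))`. -/
theorem csp_tail_bound (n m k : ℕ) (hn : 0 < n)
    (H : (Fin n → Bool) → ℝ)
    (hmean : ∑ z : Fin n → Bool, H z = 0)
    (hub : ∀ z, H z ≤ ((2 : ℝ) ^ k - 1) * m)
    (hdiff : ∀ (z : Fin n → Bool) (i : Fin n),
      |H (Function.update z i (!z i)) - H z| ≤ 2 ^ (k + 1) * k * m / n)
    (E : ℝ) (hE : E < 0) :
    (Nat.card {z : Fin n → Bool // H z ≤ E} : ℝ)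
      ≤ 2 ^ n * Real.exp (-(E ^ 2) * n / (2 ^ (2 * k + 1) * k ^ 2 * m ^ 2)) := by
  classical
  have hcard_le : (Nat.card {z : Fin n → Bool // H z ≤ E} : ℕ) ≤ 2 ^ n := by
    calc Nat.card {z : Fin n → Bool // H z ≤ E}
        ≤ Nat.card (Fin n → Bool) :=
          Nat.card_le_card_of_injective Subtype.val Subtype.val_injective
      _ = 2 ^ n := by simp [Nat.card_eq_fintype_card]
  by_cases hkm : k = 0 ∨ m = 0
  · have hden : ((2 : ℝ) ^ (2 * k + 1) * (k : ℝ) ^ 2 * (m : ℝ) ^ 2) = 0 := by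
      rcases hkm with h | h <;> simp [h]
    rw [hden, div_zero, Real.exp_zero, mul_one]
    exact_mod_cast hcard_le
  · push_neg at hkm
    have hk0 : (0 : ℝ) < k := by
      have := Nat.pos_of_ne_zero hkm.1; exact_mod_cast this
    have hm0 : (0 : ℝ) < m := by
      have := Nat.pos_of_ne_zero hkm.2; exact_mod_cast this
    have hn0 : (0 : ℝ) < n := by exact_mod_cast hn
    set c : ℝ := 2 ^ (k + 1) * (k : ℝ) * m / n with hc_def
    have hc : 0 < c := by positivity
    set t : ℝ := -4 * E / ((n : ℝ) * c ^ 2) with ht_def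
    have ht : 0 < t := div_pos (by linarith) (by positivity)
    have hcube := hoeffding_cube c (-t) hc.le Finset.univ H hmean
      (fun z z' h => by rw [show z = z' from funext fun j => h j (Finset.mem_univ j)])
      (fun z i _ => hdiff z i)
    rw [Finset.card_univ, Fintype.card_fin] at hcube
    -- Chernoff step
    have hcard_eq : Nat.card {z : Fin n → Bool // H z ≤ E}
        = (Finset.univ.filter fun z : Fin n → Bool => H z ≤ E).card := by
      rw [Nat.card_eq_fintype_card, Fintype.card_subtype]
    have hA : (Nat.card {z : Fin n → Bool // H z ≤ E} : ℝ) * Real.exp (-t * E)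
        ≤ ∑ z : Fin n → Bool, Real.exp (-t * H z) := by
      calc (Nat.card {z : Fin n → Bool // H z ≤ E} : ℝ) * Real.exp (-t * E)
          = ∑ _z ∈ Finset.univ.filter (fun z : Fin n → Bool => H z ≤ E),
              Real.exp (-t * E) := by
            rw [Finset.sum_const, nsmul_eq_mul, hcard_eq]
        _ ≤ ∑ z ∈ Finset.univ.filter (fun z : Fin n → Bool => H z ≤ E),
              Real.exp (-t * H z) := by
            refine Finset.sum_le_sum fun z hz => Real.exp_le_exp.2 ?_
            have hz' := (Finset.mem_filter.1 hz).2
            nlinarith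
        _ ≤ ∑ z : Fin n → Bool, Real.exp (-t * H z) :=
            Finset.sum_le_sum_of_subset_of_nonneg (Finset.filter_subset _ _)
              (fun _ _ _ => (Real.exp_pos _).le)
    have hstep : (Nat.card {z : Fin n → Bool // H z ≤ E} : ℝ)
        ≤ 2 ^ n * Real.exp ((n : ℝ) * ((-t) ^ 2 * c ^ 2 / 8)) * Real.exp (t * E) := by
      calc (Nat.card {z : Fin n → Bool // H z ≤ E} : ℝ)
          = (Nat.card {z : Fin n → Bool // H z ≤ E} : ℝ) * Real.exp (-t * E)
              * Real.exp (t * E) := by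
            rw [mul_assoc, ← Real.exp_add, show -t * E + t * E = 0 by ring,
              Real.exp_zero, mul_one]
        _ ≤ 2 ^ n * Real.exp ((n : ℝ) * ((-t) ^ 2 * c ^ 2 / 8)) * Real.exp (t * E) :=
            mul_le_mul_of_nonneg_right (hA.trans hcube) (Real.exp_pos _).le
    have hkey : (n : ℝ) * ((-t) ^ 2 * c ^ 2 / 8) + t * E
        = -(E ^ 2) * n / (2 ^ (2 * k + 1) * (k : ℝ) ^ 2 * (m : ℝ) ^ 2) := by
      rw [ht_def, hc_def]
      field_simp
      ring
    calc (Nat.card {z : Fin n → Bool // H z ≤ E} : ℝ)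
        ≤ 2 ^ n * Real.exp ((n : ℝ) * ((-t) ^ 2 * c ^ 2 / 8)) * Real.exp (t * E) := hstep
      _ = 2 ^ n * Real.exp ((n : ℝ) * ((-t) ^ 2 * c ^ 2 / 8) + t * E) := by
          rw [mul_assoc, ← Real.exp_add]
      _ = 2 ^ n * Real.exp (-(E ^ 2) * n / (2 ^ (2 * k + 1) * (k : ℝ) ^ 2 * (m : ℝ) ^ 2)) := by
          rw [hkey]
end

section
/- For the geometric-type sum: if 0 < α < 1, 0 < b < 1, 0 < η < 1 and |ℰ| ≥ 1-η, setting f(x) = max(0, (x - (1-η))/η) and w(σ) = b^{Σ_j x_j} · Π_{j≥0} f(|ℰ|(1-α)^j)^{x_j} over all sequences σ = (x₀, x₁, ...) of non-negative integers with finite support, the total sum over all such sequences satisfies Σ_σ w(σ) ≥ exp((b|ℰ|/(ηα)) · F((1-η)/|ℰ|)), where F(x) = 1 - x + x ln x. -/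
open Finset

set_option maxHeartbeats 1000000

/-- Geometric-type sum over `Fin n → ℕ` factorizes. -/
private lemma aux_hasSum_pi : ∀ (n : ℕ) (r : Fin n → ℝ), (∀ i, 0 ≤ r i) → (∀ i, r i < 1) →
    HasSum (fun v : Fin n → ℕ => ∏ i, r i ^ v i) (∏ i, (1 - r i)⁻¹) := by
  intro n
  induction n with
  | zero =>
    intro r _ _
    have h1 : (fun v : Fin 0 → ℕ => ∏ i, r i ^ v i) = fun _ => (1 : ℝ) := by
      funext v; simp
    have h2 : (∏ i : Fin 0, (1 - r i)⁻¹) = (1 : ℝ) := by simp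
    rw [h1, h2]
    simpa using hasSum_unique (fun _ : Fin 0 → ℕ => (1 : ℝ))
  | succ n ih =>
    intro r h0 h1
    have hgeo : HasSum (fun k : ℕ => r 0 ^ k) (1 - r 0)⁻¹ :=
      hasSum_geometric_of_lt_one (h0 0) (h1 0)
    have hrec := ih (fun i => r i.succ) (fun i => h0 _) (fun i => h1 _)
    have hsummable : Summable (fun x : ℕ × (Fin n → ℕ) =>
        (r 0 ^ x.1) * ∏ i, r i.succ ^ x.2 i) :=
      @Summable.mul_of_nonneg ℕ (Fin n → ℕ) (fun k : ℕ => r 0 ^ k)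
        (fun v : Fin n → ℕ => ∏ i : Fin n, r i.succ ^ v i) hgeo.summable hrec.summable
        (fun k => pow_nonneg (h0 0) k)
        (fun v => Finset.prod_nonneg fun i _ => pow_nonneg (h0 _) _)
    have hmul := HasSum.mul (f := fun k : ℕ => r 0 ^ k)
      (g := fun v : Fin n → ℕ => ∏ i : Fin n, r i.succ ^ v i) hgeo hrec hsummable
    rw [← (Fin.consEquiv (fun _ : Fin (n+1) => ℕ)).hasSum_iff]
    have hcomp : (fun v : Fin (n+1) → ℕ => ∏ i, r i ^ v i) ∘ (Fin.consEquiv fun _ => ℕ)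
        = fun x : ℕ × (Fin n → ℕ) => (r 0 ^ x.1) * ∏ i, r i.succ ^ x.2 i := by
      funext x
      simp [Fin.consEquiv, Fin.prod_univ_succ]
    rw [hcomp, Fin.prod_univ_succ]
    exact hmul

/-- Sum of the weights over all finitely supported sequences factorizes into a
finite product of geometric series, assuming `f` vanishes from `N` on. -/
private lemma aux_hasSum_finsupp (f : ℕ → ℝ) (b : ℝ) (N : ℕ)
    (hb0 : 0 ≤ b) (hf0 : ∀ j, 0 ≤ f j) (hr1 : ∀ j, b * f j < 1)
    (hfz : ∀ j, N ≤ j → f j = 0) :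
    HasSum (fun σ : ℕ →₀ ℕ => b ^ (σ.sum fun _ x => x) * ∏ j ∈ σ.support, f j ^ σ j)
      (∏ j ∈ Finset.range N, (1 - b * f j)⁻¹) := by
  classical
  set W : (ℕ →₀ ℕ) → ℝ :=
    fun σ => b ^ (σ.sum fun _ x => x) * ∏ j ∈ σ.support, f j ^ σ j with hWdef
  set emb : Fin N ↪ ℕ := ⟨Fin.val, Fin.val_injective⟩ with hemb
  set g : (Fin N → ℕ) → (ℕ →₀ ℕ) :=
    fun v => Finsupp.embDomain emb (Finsupp.equivFunOnFinite.symm v) with hgdef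
  have hginj : Function.Injective g :=
    (Finsupp.embDomain_injective emb).comp Finsupp.equivFunOnFinite.symm.injective
  have hgapp : ∀ (v : Fin N → ℕ) (i : Fin N), g v i.val = v i := by
    intro v i
    have h : (i.val : ℕ) = emb i := rfl
    rw [hgdef]
    simp only []
    rw [h, Finsupp.embDomain_apply]
    simp
  have hgsupp : ∀ v, (g v).support ⊆ Finset.range N := by
    intro v j hj
    rw [hgdef] at hj
    simp only [Finsupp.support_embDomain, Finset.mem_map] at hj
    obtain ⟨i, _, rfl⟩ := hj
    exact Finset.mem_range.2 i.isLt
  have hgzero : ∀ (v : Fin N → ℕ) (j : ℕ), N ≤ j → g v j = 0 := by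
    intro v j hj
    rw [hgdef]
    apply Finsupp.embDomain_notin_range
    rintro ⟨i, rfl⟩
    exact absurd i.isLt (not_lt.2 hj)
  have hW0 : ∀ σ : ℕ →₀ ℕ, σ ∉ Set.range g → W σ = 0 := by
    intro σ hσ
    by_cases hs : ∀ j ∈ σ.support, j < N
    · exfalso
      apply hσ
      refine ⟨fun i => σ i.val, ?_⟩
      ext j
      rcases lt_or_ge j N with h | h
      · have := hgapp (fun i => σ i.val) ⟨j, h⟩
        simpa using this
      · rw [hgzero _ j h]
        by_contra hne
        have hmem : j ∈ σ.support := Finsupp.mem_support_iff.2 fun h0 => hne h0.symm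
        exact absurd (hs j hmem) (not_lt.2 h)
    · push_neg at hs
      obtain ⟨j, hj, hjN⟩ := hs
      have hz : f j ^ σ j = 0 := by
        rw [hfz j hjN]
        exact zero_pow (Finsupp.mem_support_iff.1 hj)
      rw [hWdef]
      simp only []
      rw [Finset.prod_eq_zero hj hz, mul_zero]
  have hWg : ∀ v : Fin N → ℕ, W (g v) = ∏ i : Fin N, (b * f i.val) ^ v i := by
    intro v
    rw [hWdef]
    simp only []
    rw [Finsupp.sum, ← Finset.prod_pow_eq_pow_sum, ← Finset.prod_mul_distrib]
    have h1 : ∀ j ∈ (g v).support, b ^ (g v) j * f j ^ (g v) j = (b * f j) ^ (g v) j :=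
      fun j _ => (mul_pow b (f j) _).symm
    rw [Finset.prod_congr rfl h1]
    rw [Finset.prod_subset (hgsupp v) (fun j _ hj => by
      rw [Finsupp.notMem_support_iff.1 hj, pow_zero])]
    rw [← Fin.prod_univ_eq_prod_range (fun j => (b * f j) ^ (g v) j) N]
    exact Finset.prod_congr rfl (fun i _ => by rw [hgapp])
  have haux := aux_hasSum_pi N (fun i => b * f i.val)
    (fun i => mul_nonneg hb0 (hf0 _)) (fun i => hr1 _)
  rw [show W = (fun σ : ℕ →₀ ℕ =>
    b ^ (σ.sum fun _ x => x) * ∏ j ∈ σ.support, f j ^ σ j) from rfl] at hW0 hWg ⊢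
  rw [← hginj.hasSum_iff hW0]
  have hcomp : (fun σ : ℕ →₀ ℕ =>
      b ^ (σ.sum fun _ x => x) * ∏ j ∈ σ.support, f j ^ σ j) ∘ g
      = fun v : Fin N → ℕ => ∏ i, (b * f i.val) ^ v i := funext hWg
  rw [hcomp]
  have hprod : ∏ j ∈ Finset.range N, (1 - b * f j)⁻¹
      = ∏ i : Fin N, (1 - b * f i.val)⁻¹ :=
    (Fin.prod_univ_eq_prod_range (fun j => (1 - b * f j)⁻¹) N).symm
  rw [hprod]
  exact haux

/-- Key logarithmic inequality: for `0 < s ≤ t ≤ C`, `t - s ≤ C (log t - log s)`. -/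
private lemma aux_key_log {s t C : ℝ} (hs : 0 < s) (hst : s ≤ t) (htC : t ≤ C) :
    t - s ≤ C * (Real.log t - Real.log s) := by
  have ht : 0 < t := lt_of_lt_of_le hs hst
  have hC : 0 < C := lt_of_lt_of_le ht htC
  have h1 : Real.log (s / t) ≤ s / t - 1 := Real.log_le_sub_one_of_pos (div_pos hs ht)
  rw [Real.log_div hs.ne' ht.ne'] at h1
  have h2 : (t - s) / t ≤ Real.log t - Real.log s := by
    have h2' : (t - s) / t = 1 - s / t := by
      field_simp
    rw [h2']
    linarith
  have h3 : t - s ≤ C / t * (t - s) :=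
    le_mul_of_one_le_left (by linarith) ((one_le_div ht).2 htC)
  calc t - s ≤ C / t * (t - s) := h3
    _ = C * ((t - s) / t) := by ring
    _ ≤ C * (Real.log t - Real.log s) := mul_le_mul_of_nonneg_left h2 hC.le

/-- Lower bound for the sum of weights `w(σ)` over all finitely supported
sequences `σ = (x₀,x₁,…)` of non-negative integers, where
`w(σ) = b^{Σ x_j} ∏_j f(|ℰ|(1-α)^j)^{x_j}` and `f(x) = max(0, (x-(1-η))/η)`:
the total sum is at least `exp((b|ℰ|/(ηα)) F((1-η)/|ℰ|))` with
`F(x) = 1 - x + x ln x`. -/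
theorem sum_over_sequences_lb (α b η Ecal : ℝ)
    (hα0 : 0 < α) (hα1 : α < 1) (hb0 : 0 < b) (hb1 : b < 1)
    (hη0 : 0 < η) (hη1 : η < 1) (hE : 1 - η ≤ Ecal) (hE1 : Ecal ≤ 1) :
    (∑' σ : ℕ →₀ ℕ,
        b ^ (σ.sum fun _ x => x) *
          ∏ j ∈ σ.support, max 0 ((Ecal * (1 - α) ^ j - (1 - η)) / η) ^ σ j)
      ≥ Real.exp ((b * Ecal / (η * α)) *
          (1 - (1 - η) / Ecal + ((1 - η) / Ecal) * Real.log ((1 - η) / Ecal))) := by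
  classical
  have hc0 : (0:ℝ) < 1 - η := by linarith
  have hE0 : (0:ℝ) < Ecal := lt_of_lt_of_le hc0 hE
  have h1α0 : (0:ℝ) ≤ 1 - α := by linarith
  have h1α1 : (1:ℝ) - α < 1 := by linarith
  set f : ℕ → ℝ := fun j => max 0 ((Ecal * (1 - α) ^ j - (1 - η)) / η) with hfdef
  have hf0 : ∀ j, 0 ≤ f j := fun j => le_max_left _ _
  have hf1 : ∀ j, f j ≤ 1 := by
    intro j
    apply max_le (by linarith)
    rw [div_le_one hη0]
    have hp1 : (1 - α) ^ j ≤ 1 := pow_le_one₀ h1α0 h1α1.le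
    nlinarith
  have hr1 : ∀ j, b * f j < 1 := by
    intro j
    calc b * f j ≤ b * 1 := mul_le_mul_of_nonneg_left (hf1 j) hb0.le
    _ < 1 := by linarith
  -- choose N
  have hex : ∃ n, Ecal * (1 - α) ^ n ≤ 1 - η := by
    obtain ⟨n, hn⟩ := exists_pow_lt_of_lt_one hc0 h1α1
    refine ⟨n, le_of_lt (lt_of_le_of_lt ?_ hn)⟩
    nlinarith [pow_nonneg h1α0 n]
  set N := Nat.find hex with hNdef
  have hxN : Ecal * (1 - α) ^ N ≤ 1 - η := Nat.find_spec hex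
  have hxlt : ∀ j, j < N → 1 - η < Ecal * (1 - α) ^ j :=
    fun j hj => lt_of_not_ge (Nat.find_min hex hj)
  have hfz : ∀ j, N ≤ j → f j = 0 := by
    intro j hj
    have hple : (1 - α) ^ j ≤ (1 - α) ^ N := pow_le_pow_of_le_one h1α0 h1α1.le hj
    have hle : Ecal * (1 - α) ^ j ≤ 1 - η := le_trans (by nlinarith) hxN
    rw [hfdef]
    simp only []
    apply max_eq_left
    apply div_nonpos_of_nonpos_of_nonneg (by linarith) hη0.le
  -- the sum of the weights
  have hW := aux_hasSum_finsupp f b N hb0.le hf0 hr1 hfz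
  have htsum : (∑' σ : ℕ →₀ ℕ,
      b ^ (σ.sum fun _ x => x) *
        ∏ j ∈ σ.support, max 0 ((Ecal * (1 - α) ^ j - (1 - η)) / η) ^ σ j)
      = ∏ j ∈ Finset.range N, (1 - b * f j)⁻¹ := hW.tsum_eq
  rw [ge_iff_le, htsum]
  -- step 1: exp of the sum is below the product
  have hstep1 : Real.exp (∑ j ∈ Finset.range N, b * f j)
      ≤ ∏ j ∈ Finset.range N, (1 - b * f j)⁻¹ := by
    rw [Real.exp_sum]
    apply Finset.prod_le_prod (fun j _ => (Real.exp_pos _).le)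
    intro j _
    have h1 : 0 < 1 - b * f j := by linarith [hr1 j]
    have h2 : 1 - b * f j ≤ (Real.exp (b * f j))⁻¹ := by
      rw [← Real.exp_neg]
      linarith [Real.add_one_le_exp (-(b * f j))]
    calc Real.exp (b * f j) = ((Real.exp (b * f j))⁻¹)⁻¹ := (inv_inv _).symm
    _ ≤ (1 - b * f j)⁻¹ := inv_anti₀ h1 h2
  refine le_trans ?_ hstep1
  rw [Real.exp_le_exp]
  -- step 2: the exponent bound
  set y : ℝ := (1 - α) ^ N with hydef
  have hy0 : 0 < y := pow_pos (by linarith) N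
  have hXc : Ecal * y ≤ 1 - η := hxN
  -- closed form of the sum
  have hαne : α ≠ 0 := hα0.ne'
  have hηne : η ≠ 0 := hη0.ne'
  have hgeom : ∑ j ∈ Finset.range N, (1 - α) ^ j = (1 - y) / α := by
    rw [geom_sum_eq (by intro h; apply hα0.ne'; linarith) N]
    rw [div_eq_div_iff (by intro h; apply hα0.ne'; linarith : (1:ℝ) - α - 1 ≠ 0) hαne]
    ring
  have hfeq : ∀ j ∈ Finset.range N, f j = (Ecal * (1 - α) ^ j - (1 - η)) / η := by
    intro j hj
    rw [hfdef]
    simp only []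
    rw [max_eq_right]
    apply div_nonneg _ hη0.le
    linarith [hxlt j (Finset.mem_range.1 hj)]
  have hsum : ∑ j ∈ Finset.range N, b * f j
      = (b / (η * α)) * (Ecal * (1 - y) - N * α * (1 - η)) := by
    calc ∑ j ∈ Finset.range N, b * f j
        = ∑ j ∈ Finset.range N, (b / η * Ecal * (1 - α) ^ j - b / η * (1 - η)) := by
          apply Finset.sum_congr rfl
          intro j hj
          rw [hfeq j hj]
          field_simp
      _ = b / η * Ecal * ∑ j ∈ Finset.range N, (1 - α) ^ j - N * (b / η * (1 - η)) := by
          rw [Finset.sum_sub_distrib, ← Finset.mul_sum, Finset.sum_const, Finset.card_range,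
            nsmul_eq_mul]
      _ = (b / (η * α)) * (Ecal * (1 - y) - N * α * (1 - η)) := by
          rw [hgeom]
          field_simp
  rw [hsum]
  -- core inequality
  have hcore : (1 - η) * Real.log ((1 - η) / Ecal)
      ≤ (1 - η) - Ecal * y - N * α * (1 - η) := by
    rcases Nat.eq_zero_or_pos N with hN0 | hNpos
    · have hy1 : y = 1 := by rw [hydef, hN0, pow_zero]
      have hEc : Ecal = 1 - η := le_antisymm (by nlinarith) hE
      rw [hEc, div_self hc0.ne', Real.log_one, hy1, hN0]
      norm_num
    · -- N ≥ 1
      obtain ⟨M, hMN⟩ : ∃ M, N = M + 1 := ⟨N - 1, (Nat.succ_pred_eq_of_pos hNpos).symm⟩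
      have hxM : 1 - η < Ecal * (1 - α) ^ M := hxlt M (by omega)
      have hXeq : Ecal * y = (1 - α) * (Ecal * (1 - α) ^ M) := by
        rw [hydef, hMN, pow_succ]
        ring
      set X : ℝ := Ecal * y with hXdef
      have hsX : (1 - α) * (1 - η) ≤ X := by
        rw [hXeq]
        apply mul_le_mul_of_nonneg_left hxM.le h1α0
      have hs0 : (0:ℝ) < (1 - α) * (1 - η) := mul_pos (by linarith) hc0
      have hX0 : 0 < X := lt_of_lt_of_le hs0 hsX
      have hkey := aux_key_log hs0 hsX hXc
      -- hkey : X - (1-α)(1-η) ≤ (1-η)(log X - log((1-α)(1-η)))  with C = 1-η? careful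
      have hlogX : Real.log X = Real.log Ecal + N * Real.log (1 - α) := by
        rw [hXdef, hydef, Real.log_mul hE0.ne' (pow_pos (by linarith) N).ne',
          Real.log_pow]
      have hlogs : Real.log ((1 - α) * (1 - η)) = Real.log (1 - α) + Real.log (1 - η) :=
        Real.log_mul (by linarith) hc0.ne'
      have hlogq : Real.log ((1 - η) / Ecal) = Real.log (1 - η) - Real.log Ecal :=
        Real.log_div hc0.ne' hE0.ne'
      have hlog1a : Real.log (1 - α) ≤ -α := by
        have := Real.log_le_sub_one_of_pos (show (0:ℝ) < 1 - α by linarith)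
        linarith
      have hN1 : (1:ℝ) ≤ (N:ℝ) := by exact_mod_cast hNpos
      have h3 : (1 - η) * ((N:ℝ) - 1) * Real.log (1 - α)
          ≤ (1 - η) * ((N:ℝ) - 1) * (-α) := by
        apply mul_le_mul_of_nonneg_left hlog1a
        apply mul_nonneg hc0.le
        linarith
      rw [hlogX, hlogs] at hkey
      rw [hlogq]
      nlinarith [hkey, h3]
  -- conclude
  have hpos : (0:ℝ) < b / (η * α) := by positivity
  have hEne : Ecal ≠ 0 := hE0.ne'
  have hT : (b * Ecal / (η * α)) *
      (1 - (1 - η) / Ecal + ((1 - η) / Ecal) * Real.log ((1 - η) / Ecal))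
      = (b / (η * α)) * (Ecal - (1 - η) + (1 - η) * Real.log ((1 - η) / Ecal)) := by
    field_simp
  rw [hT]
  apply mul_le_mul_of_nonneg_left _ hpos.le
  nlinarith [hcore]
end

section
/- For 0 < α < 1, the infinite product Π_{j=1}^∞ 1/(1-(1-α)^j) satisfies ln(Π_{j=1}^∞ 1/(1-(1-α)^j)) ≤ 2/α. -/
open Real

/-- For `0 < α < 1`, the infinite product `∏_{j=1}^∞ 1/(1-(1-α)^j)` satisfies
`ln ∏ ≤ 2/α`. -/
theorem log_infinite_product_le (α : ℝ) (hα0 : 0 < α) (hα1 : α < 1) :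
    Real.log (∏' j : ℕ, (1 - (1 - α) ^ (j + 1))⁻¹) ≤ 2 / α := by
  set q : ℝ := 1 - α with hq
  have hq0 : 0 < q := by simp only [hq]; linarith
  have hq1 : q < 1 := by simp only [hq]; linarith
  have hqm_lt : ∀ m : ℕ, q ^ (m + 1) < 1 := fun m => pow_lt_one₀ hq0.le hq1 m.succ_ne_zero
  have hqm_pos : ∀ m : ℕ, 0 < q ^ (m + 1) := fun m => pow_pos hq0 _
  have hpos : ∀ m : ℕ, 0 < 1 - q ^ (m + 1) := fun m => by linarith [hqm_lt m]
  set L : ℝ := -Real.log q with hL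
  have hL_pos : 0 < L := by
    have := Real.log_neg hq0 hq1
    simp only [hL]; linarith
  have hαL : α ≤ L := by
    have h := Real.log_le_sub_one_of_pos hq0
    simp only [hL, hq] at *
    linarith
  -- key inequality : m * L * q^m ≤ 1 - q^m
  have key : ∀ m : ℕ, (m : ℝ) * L * q ^ m ≤ 1 - q ^ m := by
    intro m
    have hqm : 0 < q ^ m := pow_pos hq0 m
    have h1 : Real.log ((q ^ m)⁻¹) ≤ (q ^ m)⁻¹ - 1 :=
      Real.log_le_sub_one_of_pos (by positivity)
    rw [Real.log_inv, Real.log_pow] at h1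
    have h2 := mul_le_mul_of_nonneg_right h1 hqm.le
    have h3 : (q ^ m)⁻¹ * q ^ m = 1 := inv_mul_cancel₀ (ne_of_gt hqm)
    simp only [hL]
    nlinarith [h2, h3]
  -- the summand functions
  set f : ℕ → ℝ := fun j => -Real.log (1 - q ^ (j + 1)) with hf
  set F : ℕ → ℕ → ℝ := fun j k => q ^ ((j + 1) * (k + 1)) / (k + 1) with hF
  have hF_nonneg : ∀ j k, 0 ≤ F j k := fun j k => by
    have := hqm_pos j
    simp only [hF]
    positivity
  -- rows : for fixed j, sum over k equals f j
  have row : ∀ j : ℕ, HasSum (fun k => F j k) (f j) := by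
    intro j
    have habs : |q ^ (j + 1)| < 1 := by
      rw [abs_of_pos (hqm_pos j)]; exact hqm_lt j
    have h := hasSum_pow_div_log_of_abs_lt_one habs
    refine h.congr_fun fun k => ?_
    simp only [hF, pow_mul]
  have hf_nonneg : ∀ j, 0 ≤ f j := fun j => (row j).nonneg (hF_nonneg j)
  -- f is summable (comparison with geometric series)
  have hf_le : ∀ j : ℕ, f j ≤ q ^ (j + 1) / (1 - q) := by
    intro j
    have hne : 1 - q ^ (j + 1) ≠ 0 := (hpos j).ne'
    have h1 : Real.log ((1 - q ^ (j + 1))⁻¹) ≤ (1 - q ^ (j + 1))⁻¹ - 1 :=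
      Real.log_le_sub_one_of_pos (inv_pos.mpr (hpos j))
    rw [Real.log_inv] at h1
    have h2 : (1 - q ^ (j + 1))⁻¹ - 1 = q ^ (j + 1) / (1 - q ^ (j + 1)) := by
      field_simp
      ring
    rw [h2] at h1
    have h3 : q ^ (j + 1) / (1 - q ^ (j + 1)) ≤ q ^ (j + 1) / (1 - q) := by
      have h4 : q ^ (j + 1) ≤ q ^ 1 := pow_le_pow_of_le_one hq0.le hq1.le (by omega)
      rw [pow_one] at h4
      exact div_le_div_of_nonneg_left (hqm_pos j).le (by linarith) (by linarith)
    simpa only [hf] using h1.trans h3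
  have hgeom : Summable (fun j : ℕ => q ^ (j + 1) / (1 - q)) := by
    apply Summable.div_const
    exact ((summable_geometric_of_lt_one hq0.le hq1).mul_left q).congr fun j => by
      rw [← pow_succ']
  have hf_sum : Summable f := Summable.of_nonneg_of_le hf_nonneg hf_le hgeom
  -- summability of the double family
  have huncurry : Summable (Function.uncurry F) := by
    exact (summable_prod_of_nonneg (fun p => hF_nonneg p.1 p.2)).mpr
      ⟨fun j => (row j).summable, hf_sum.congr fun j => ((row j).tsum_eq).symm⟩
  -- columns : for fixed k, sum over j
  set g : ℕ → ℝ := fun k => q ^ (k + 1) / (1 - q ^ (k + 1)) / (k + 1) with hg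
  have col : ∀ k : ℕ, HasSum (fun j => F j k) (g k) := by
    intro k
    have h := (hasSum_geometric_of_lt_one (hqm_pos k).le (hqm_lt k)).mul_left (q ^ (k + 1))
    have h2 : q ^ (k + 1) * (1 - q ^ (k + 1))⁻¹ = q ^ (k + 1) / (1 - q ^ (k + 1)) := by
      rw [div_eq_mul_inv]
    rw [h2] at h
    have h3 := h.div_const ((k : ℝ) + 1)
    refine h3.congr_fun fun j => ?_
    simp only [hF]
    rw [← pow_succ', ← pow_mul]
    ring_nf
  -- swap the order of summation
  have swap : ∑' j, f j = ∑' k, g k := by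
    calc ∑' j, f j = ∑' j, ∑' k, F j k := by
          exact tsum_congr fun j => ((row j).tsum_eq).symm
      _ = ∑' k, ∑' j, F j k := (Summable.tsum_comm huncurry).symm
      _ = ∑' k, g k := tsum_congr fun k => (col k).tsum_eq
  -- bound each g k
  have hg_le : ∀ k : ℕ, g k ≤ 1 / ((k : ℝ) + 1) ^ 2 / L := by
    intro k
    have hk1 : (0 : ℝ) < (k : ℝ) + 1 := by positivity
    have hkey := key (k + 1)
    push_cast at hkey
    have h1 : q ^ (k + 1) / (1 - q ^ (k + 1)) ≤ 1 / (((k : ℝ) + 1) * L) := by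
      rw [div_le_div_iff₀ (hpos k) (by positivity)]
      nlinarith [hkey]
    have h3 : q ^ (k + 1) / (1 - q ^ (k + 1)) / ((k : ℝ) + 1)
        ≤ 1 / (((k : ℝ) + 1) * L) / ((k : ℝ) + 1) := by gcongr
    refine h3.trans (le_of_eq ?_)
    field_simp
  have hg_nonneg : ∀ k, 0 ≤ g k := fun k => by
    have := hqm_pos k
    have := hpos k
    simp only [hg]
    positivity
  -- the Basel-type bound
  have hbasel : HasSum (fun k : ℕ => 1 / ((k : ℝ) + 1) ^ 2 / L) (π ^ 2 / 6 / L) := by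
    have h := (hasSum_nat_add_iff' (f := fun n : ℕ => 1 / (n : ℝ) ^ 2) 1).mpr hasSum_zeta_two
    simp only [Finset.range_one, Finset.sum_singleton, Nat.cast_zero] at h
    norm_num at h
    exact (h.div_const L).congr_fun fun k => by push_cast; ring_nf
  have hg_sum : Summable g :=
    Summable.of_nonneg_of_le hg_nonneg hg_le hbasel.summable
  have hsum_le : ∑' k, g k ≤ π ^ 2 / 6 / L := by
    calc ∑' k, g k ≤ ∑' k : ℕ, 1 / ((k : ℝ) + 1) ^ 2 / L :=
          Summable.tsum_le_tsum hg_le hg_sum hbasel.summable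
      _ = π ^ 2 / 6 / L := hbasel.tsum_eq
  -- identify the log of the product with the sum
  have hprod : (∏' j : ℕ, (1 - q ^ (j + 1))⁻¹) = Real.exp (∑' j, f j) := by
    have h := hf_sum.hasSum.rexp
    have h2 : (Real.exp ∘ f) = fun j : ℕ => (1 - q ^ (j + 1))⁻¹ := by
      funext j
      simp only [Function.comp, hf, Real.exp_neg, Real.exp_log (hpos j)]
    rw [h2] at h
    exact h.tprod_eq
  rw [hprod, Real.log_exp, swap]
  -- final numeric bound : π²/6 ≤ 2 and L ≥ α
  have hpi : π ^ 2 / 6 ≤ 2 := by nlinarith [Real.pi_lt_d2, Real.pi_pos]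
  calc ∑' k, g k ≤ π ^ 2 / 6 / L := hsum_le
    _ ≤ 2 / L := by gcongr
    _ ≤ 2 / α := div_le_div_of_nonneg_left (by norm_num) hα0 hαL
end

section
/- Let H_b = -X/n + b·G with G diagonal, -I ≼ G ≼ 0, and suppose at most 2^{(1-γ)n} diagonal entries of G are nonzero. If the short-path condition holds (all eigenvalues of Π̄H_bΠ̄ restricted to range(Π̄) are ≥ -1+1/n, where Π̄ = I - |+⟩⟨+| with |+⟩ the uniform superposition state), then the ground state energy E_b of H_b satisfies E_b ≥ -1 - 2^{-γn}(b + b²n). -/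
open Matrix

/-- The transverse-field matrix `X = Σᵢ Xᵢ` in the computational basis. -/
noncomputable def Xmat (n : ℕ) : Matrix (Fin n → Bool) (Fin n → Bool) ℂ :=
  fun z w => if ∃ i, w = Function.update z i (!z i) then 1 else 0

/-- `H_b = -X/n + b G` with `G` the diagonal matrix of a function `g`. -/
noncomputable def Hb (n : ℕ) (b : ℝ) (g : (Fin n → Bool) → ℝ) :
    Matrix (Fin n → Bool) (Fin n → Bool) ℂ :=
  (-(1 / (n : ℂ))) • Xmat n + (b : ℂ) • Matrix.diagonal (fun z => (g z : ℂ))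

lemma flip_eq {n : ℕ} (z : Fin n → Bool) (i : Fin n) :
    Function.update (Function.update z i (!z i)) i (!(Function.update z i (!z i)) i) = z := by
  funext j
  rcases eq_or_ne j i with rfl | hj
  · simp
  · simp [Function.update_of_ne hj]

lemma Xmat_symm (n : ℕ) (z w : Fin n → Bool) : Xmat n z w = Xmat n w z := by
  unfold Xmat
  refine if_congr ?_ rfl rfl
  constructor
  · rintro ⟨i, rfl⟩; exact ⟨i, (flip_eq z i).symm⟩
  · rintro ⟨i, rfl⟩; exact ⟨i, (flip_eq w i).symm⟩

lemma Xmat_row_sum (n : ℕ) (z : Fin n → Bool) : ∑ w, Xmat n z w = (n : ℂ) := by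
  classical
  unfold Xmat
  rw [Finset.sum_boole]
  have hinj : Function.Injective (fun i : Fin n => Function.update z i (!z i)) := by
    intro i j h
    by_contra hij
    have h2 := congrFun h i
    simp only [Function.update_self, Function.update_of_ne hij] at h2
    simp at h2
  have himg : Finset.univ.filter (fun w => ∃ i, w = Function.update z i (!z i))
      = Finset.univ.image (fun i : Fin n => Function.update z i (!z i)) := by
    ext w; simp [eq_comm]
  rw [himg, Finset.card_image_of_injective _ hinj, Finset.card_univ, Fintype.card_fin]

lemma Hb_row_sum (n : ℕ) (hn : 0 < n) (b : ℝ) (g : (Fin n → Bool) → ℝ) (z : Fin n → Bool) :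
    ∑ w, Hb n b g z w = -1 + (b : ℂ) * g z := by
  classical
  have hn0 : (n:ℂ) ≠ 0 := Nat.cast_ne_zero.mpr hn.ne'
  unfold Hb
  simp only [Matrix.add_apply, Matrix.smul_apply, smul_eq_mul]
  rw [Finset.sum_add_distrib, ← Finset.mul_sum, ← Finset.mul_sum, Xmat_row_sum]
  have : ∑ w, Matrix.diagonal (fun z => (g z : ℂ)) z w = (g z : ℂ) := by
    simp [Matrix.diagonal_apply, Finset.sum_ite_eq]
  rw [this]
  field_simp

lemma Hb_symm (n : ℕ) (b : ℝ) (g : (Fin n → Bool) → ℝ) (z w : Fin n → Bool) :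
    Hb n b g z w = Hb n b g w z := by
  unfold Hb
  simp only [Matrix.add_apply, Matrix.smul_apply, smul_eq_mul, Matrix.diagonal_apply]
  rw [Xmat_symm]
  rcases eq_or_ne z w with rfl | hzw
  · simp
  · simp [hzw, Ne.symm hzw]

lemma Hb_col_sum (n : ℕ) (hn : 0 < n) (b : ℝ) (g : (Fin n → Bool) → ℝ) (w : Fin n → Bool) :
    ∑ z, Hb n b g z w = -1 + (b : ℂ) * g w := by
  rw [Finset.sum_congr rfl (fun z _ => Hb_symm n b g z w)]
  exact Hb_row_sum n hn b g w

lemma amgm (b nn x y : ℝ) (hb : 0 ≤ b) (hn : 0 < nn) (hx : 0 ≤ x) (hy : 0 ≤ y) :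
    2 * b * x * y ≤ b ^ 2 * nn * x ^ 2 + y ^ 2 / nn := by
  rw [← sub_nonneg]
  have h : b ^ 2 * nn * x ^ 2 + y ^ 2 / nn - 2 * b * x * y = (b * nn * x - y) ^ 2 / nn := by
    field_simp; ring
  rw [h]; positivity


set_option maxHeartbeats 1000000 in
/-- If `-I ≼ G ≼ 0` is diagonal with at most `2^{(1-γ)n}` nonzero entries and the
short-path condition holds for `H_b = -X/n + bG`, then every eigenvalue of `H_b`
(in particular the ground energy) is at least `-1 - 2^{-γn}(b + b²n)`. -/
theorem short_path_small_ground_energy_shift (n : ℕ) (hn : 0 < n)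
    (b γ : ℝ) (hb : 0 ≤ b) (g : (Fin n → Bool) → ℝ)
    (hg : ∀ z, -1 ≤ g z ∧ g z ≤ 0)
    (hcard : (Nat.card {z : Fin n → Bool // g z ≠ 0} : ℝ) ≤ (2 : ℝ) ^ ((1 - γ) * (n : ℝ)))
    (hshort : ∀ ψ : (Fin n → Bool) → ℂ, (∑ z, ψ z) = 0 →
      (-1 + 1 / (n : ℝ)) * ∑ z, ‖ψ z‖ ^ 2 ≤ (star ψ ⬝ᵥ (Hb n b g).mulVec ψ).re) :
    ∀ (μ : ℝ) (ψ : (Fin n → Bool) → ℂ), ψ ≠ 0 →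
      (Hb n b g).mulVec ψ = (μ : ℂ) • ψ →
      -1 - (2 : ℝ) ^ (-(γ * (n : ℝ))) * (b + b ^ 2 * (n : ℝ)) ≤ μ := by
  classical
  intro μ ψ hψ0 heig
  have hn0 : (0:ℝ) < (n:ℝ) := Nat.cast_pos.mpr hn
  have hnc0 : (n:ℂ) ≠ 0 := Nat.cast_ne_zero.mpr hn.ne'
  set H := Hb n b g with hH
  -- decomposition
  set c : ℂ := (∑ z, ψ z) / ((2:ℕ)^n : ℂ) with hc
  set φ : (Fin n → Bool) → ℂ := fun z => ψ z - c with hφ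
  have hNcard : (Fintype.card (Fin n → Bool) : ℂ) = ((2:ℕ)^n : ℂ) := by simp
  have hφsum : ∑ z, φ z = 0 := by
    have h2 : ((2:ℕ)^n : ℂ) ≠ 0 := by norm_num
    simp only [hφ, Finset.sum_sub_distrib, Finset.sum_const, Finset.card_univ, nsmul_eq_mul]
    rw [hNcard, hc]
    field_simp
    ring
  have hψeq : ψ = (c • (fun _ => (1:ℂ))) + φ := by
    funext z; simp [hφ]
  -- quantities
  set u : (Fin n → Bool) → ℂ := fun _ => (1:ℂ) with hu
  set B0 : ℂ := ∑ z, (g z : ℂ) * φ z with hB0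
  set Sg : ℝ := ∑ z, g z with hSg
  set K : ℝ := ((Finset.univ.filter fun z : Fin n → Bool => g z ≠ 0).card : ℝ) with hK
  set P : ℝ := ∑ z, ‖φ z‖ ^ 2 with hP
  set a : ℝ := ‖c‖ ^ 2 with ha
  set Nr : ℝ := (2:ℝ)^n with hNr
  -- row/col sum facts
  have hmulu : H.mulVec u = fun z => -1 + (b:ℂ) * g z := by
    funext z
    simp only [Matrix.mulVec, dotProduct, hu, mul_one]
    exact Hb_row_sum n hn b g z
  have huHu : star u ⬝ᵥ H.mulVec u = ((-Nr + b * Sg : ℝ) : ℂ) := by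
    rw [hmulu]
    simp only [dotProduct, Pi.star_apply, hu, star_one, one_mul]
    rw [Finset.sum_add_distrib, ← Finset.mul_sum]
    push_cast [hSg, hNr]
    simp [Finset.card_univ]
  have huHφ : star u ⬝ᵥ H.mulVec φ = (b:ℂ) * B0 := by
    simp only [dotProduct, Pi.star_apply, hu, star_one, one_mul, Matrix.mulVec]
    rw [Finset.sum_comm]
    calc ∑ w, ∑ z, H z w * φ w
        = ∑ w, (-1 + (b:ℂ) * g w) * φ w := by
          refine Finset.sum_congr rfl fun w _ => ?_
          rw [← Finset.sum_mul, Hb_col_sum n hn b g w]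
      _ = -∑ w, φ w + (b:ℂ) * ∑ w, (g w : ℂ) * φ w := by
          rw [Finset.mul_sum, ← Finset.sum_neg_distrib, ← Finset.sum_add_distrib]
          refine Finset.sum_congr rfl fun w _ => by ring
      _ = (b:ℂ) * B0 := by rw [hφsum, hB0]; ring
  have hφHu : star φ ⬝ᵥ H.mulVec u = (b:ℂ) * (starRingEnd ℂ) B0 := by
    rw [hmulu]
    simp only [dotProduct, Pi.star_apply]
    calc ∑ z, (starRingEnd ℂ) (φ z) * (-1 + (b:ℂ) * g z)
        = -(starRingEnd ℂ) (∑ z, φ z) + (b:ℂ) * ∑ z, (starRingEnd ℂ) ((g z : ℂ) * φ z) := by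
          rw [map_sum, Finset.mul_sum, ← Finset.sum_neg_distrib, ← Finset.sum_add_distrib]
          refine Finset.sum_congr rfl fun z _ => ?_
          rw [_root_.map_mul, Complex.conj_ofReal]
          ring
      _ = (b:ℂ) * (starRingEnd ℂ) B0 := by rw [hφsum, hB0, map_sum]; simp
  set T3 : ℂ := star φ ⬝ᵥ H.mulVec φ with hT3
  -- expansion of the quadratic form
  have hQ : star ψ ⬝ᵥ H.mulVec ψ
      = ((starRingEnd ℂ) c * c) * ((-Nr + b * Sg : ℝ) : ℂ)
        + (b:ℂ) * ((starRingEnd ℂ) c * B0 + (starRingEnd ℂ) ((starRingEnd ℂ) c * B0)) + T3 := by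
    conv_lhs => rw [hψeq]
    rw [star_add, star_smul, Matrix.mulVec_add, Matrix.mulVec_smul]
    simp only [add_dotProduct, dotProduct_add, smul_dotProduct, dotProduct_smul, smul_eq_mul,
      Complex.star_def]
    rw [huHu, huHφ, hφHu, hT3]
    simp only [_root_.map_mul, Complex.conj_conj]
    ring
  -- real part of the quadratic form
  have hQre2 : (star ψ ⬝ᵥ H.mulVec ψ).re
      = a * (-Nr + b * Sg) + 2 * b * ((starRingEnd ℂ) c * B0).re + T3.re := by
    rw [hQ, Complex.conj_mul' c, Complex.add_conj]
    rw [show ((‖c‖:ℂ))^2 * ((-Nr + b * Sg : ℝ) : ℂ) + (b:ℂ) * ((2 * ((starRingEnd ℂ) c * B0).re : ℝ) : ℂ)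
        = (((a * (-Nr + b * Sg) + 2 * b * ((starRingEnd ℂ) c * B0).re : ℝ)) : ℂ) by push_cast [ha]; ring]
    simp
  -- eigenvalue identity
  have hsum_norm : ∑ z, ‖ψ z‖ ^ 2 = Nr * a + P := by
    have hexp : ∀ z : Fin n → Bool,
        ‖ψ z‖ ^ 2 = ‖c‖ ^ 2 + 2 * ((starRingEnd ℂ) c * φ z).re + ‖φ z‖ ^ 2 := by
      intro z
      have hz : ψ z = c + φ z := by simp [hφ]
      rw [hz]
      have h : ((‖c + φ z‖ : ℂ)) ^ 2
          = (‖c‖:ℂ)^2 + ((2 * ((starRingEnd ℂ) c * φ z).re : ℝ) : ℂ) + (‖φ z‖:ℂ)^2 := by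
        rw [← Complex.conj_mul', ← Complex.conj_mul', ← Complex.conj_mul', ← Complex.add_conj]
        simp only [map_add, _root_.map_mul, Complex.conj_conj]
        ring
      exact_mod_cast congrArg Complex.re h
    calc ∑ z, ‖ψ z‖ ^ 2
        = ∑ z : Fin n → Bool, (‖c‖ ^ 2 + 2 * ((starRingEnd ℂ) c * φ z).re + ‖φ z‖ ^ 2) :=
          Finset.sum_congr rfl fun z _ => hexp z
      _ = Nr * a + 2 * ((starRingEnd ℂ) c * ∑ z, φ z).re + P := by
          rw [Finset.sum_add_distrib, Finset.sum_add_distrib, Finset.sum_const, Finset.card_univ]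
          congr 1
          congr 1
          · rw [show Fintype.card (Fin n → Bool) = 2 ^ n by simp, nsmul_eq_mul, hNr, ha]
            push_cast; ring
          · conv_rhs => rw [Finset.mul_sum, Complex.re_sum, Finset.mul_sum]
      _ = Nr * a + P := by rw [hφsum]; simp
  have hS0 : 0 < Nr * a + P := by
    rw [← hsum_norm]
    have hz0 : ∃ z, ψ z ≠ 0 := by
      by_contra h
      push_neg at h
      exact hψ0 (funext h)
    obtain ⟨z0, hz0⟩ := hz0
    exact Finset.sum_pos' (fun z _ => by positivity)
      ⟨z0, Finset.mem_univ _, pow_pos (norm_pos_iff.mpr hz0) 2⟩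
  have hQeig : (star ψ ⬝ᵥ H.mulVec ψ).re = μ * (Nr * a + P) := by
    rw [heig]
    have : star ψ ⬝ᵥ ((μ:ℂ) • ψ) = (μ:ℂ) * ((∑ z, ‖ψ z‖ ^ 2 : ℝ) : ℂ) := by
      simp only [dotProduct, Pi.smul_apply, smul_eq_mul, Pi.star_apply, Complex.star_def]
      push_cast
      rw [Finset.mul_sum]
      refine Finset.sum_congr rfl fun z _ => ?_
      rw [show (starRingEnd ℂ) (ψ z) * ((μ:ℂ) * ψ z) = (μ:ℂ) * ((starRingEnd ℂ) (ψ z) * ψ z) by ring,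
        Complex.conj_mul']
    rw [this, ← Complex.ofReal_mul, Complex.ofReal_re, hsum_norm]
  -- short-path bound on the orthogonal part
  have hT3re : (-1 + 1 / (n:ℝ)) * P ≤ T3.re := by
    rw [hT3, hP]
    exact hshort φ hφsum
  -- bound on Sg
  have hind : ∀ z : Fin n → Bool, -(if g z ≠ 0 then (1:ℝ) else 0) ≤ g z := by
    intro z
    by_cases hgz : g z = 0
    · simp [hgz]
    · simp only [hgz, ne_eq, not_false_eq_true, if_true]
      exact (hg z).1
  have hsumind : ∑ z : Fin n → Bool, (if g z ≠ 0 then (1:ℝ) else 0) = K := by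
    rw [Finset.sum_boole, hK]
  have hSgK : -K ≤ Sg := by
    rw [← hsumind, ← Finset.sum_neg_distrib, hSg]
    exact Finset.sum_le_sum fun z _ => hind z
  -- cross term bound
  have hwre : ((starRingEnd ℂ) c * B0).re = ∑ z, g z * ((starRingEnd ℂ) c * φ z).re := by
    rw [hB0, Finset.mul_sum, Complex.re_sum]
    refine Finset.sum_congr rfl fun z _ => ?_
    rw [show (starRingEnd ℂ) c * ((g z : ℂ) * φ z) = ((g z : ℝ) : ℂ) * ((starRingEnd ℂ) c * φ z) by ring,
      Complex.re_ofReal_mul]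
  have hterm : ∀ z : Fin n → Bool,
      -((if g z ≠ 0 then (1:ℝ) else 0) * (b ^ 2 * n * a) + ‖φ z‖ ^ 2 / n)
        ≤ 2 * b * (g z * ((starRingEnd ℂ) c * φ z).re) := by
    intro z
    set r := ((starRingEnd ℂ) c * φ z).re with hr
    by_cases hgz : g z = 0
    · simp only [hgz, ne_eq, not_true_eq_false, if_false, zero_mul, mul_zero, zero_add]
      rw [neg_nonpos]
      positivity
    · simp only [hgz, ne_eq, not_false_eq_true, if_true, one_mul]
      have hrabs : |r| ≤ ‖c‖ * ‖φ z‖ := by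
        calc |r| ≤ ‖(starRingEnd ℂ) c * φ z‖ := by
              rw [hr]
              exact Complex.abs_re_le_norm _
          _ = ‖c‖ * ‖φ z‖ := by rw [norm_mul]; simp
      have hgabs : |g z| ≤ 1 := abs_le.mpr ⟨(hg z).1, le_trans (hg z).2 zero_le_one⟩
      have h1 : -(‖c‖ * ‖φ z‖) ≤ g z * r := by
        have habs : |g z * r| ≤ ‖c‖ * ‖φ z‖ := by
          rw [abs_mul]
          calc |g z| * |r| ≤ 1 * (‖c‖ * ‖φ z‖) :=
                mul_le_mul hgabs hrabs (abs_nonneg _) zero_le_one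
            _ = ‖c‖ * ‖φ z‖ := one_mul _
        linarith [neg_abs_le (g z * r)]
      have h2 := amgm b n ‖c‖ ‖φ z‖ hb hn0 (norm_nonneg _) (norm_nonneg _)
      rw [ha]
      nlinarith [mul_le_mul_of_nonneg_left h1 (by linarith : (0:ℝ) ≤ 2 * b)]
  have hcross : -(K * (b ^ 2 * n * a) + P / n) ≤ 2 * b * ((starRingEnd ℂ) c * B0).re := by
    rw [hwre, Finset.mul_sum]
    calc -(K * (b ^ 2 * n * a) + P / n)
        = ∑ z : Fin n → Bool,
            (-((if g z ≠ 0 then (1:ℝ) else 0) * (b ^ 2 * n * a) + ‖φ z‖ ^ 2 / n)) := by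
          have hs : ∑ z : Fin n → Bool,
              ((if g z ≠ 0 then (1:ℝ) else 0) * (b ^ 2 * n * a) + ‖φ z‖ ^ 2 / n)
              = K * (b ^ 2 * n * a) + P / n := by
            rw [Finset.sum_add_distrib, ← Finset.sum_mul, hsumind, ← Finset.sum_div, ← hP]
          rw [← hs, ← Finset.sum_neg_distrib]
      _ ≤ ∑ z : Fin n → Bool, 2 * b * (g z * ((starRingEnd ℂ) c * φ z).re) :=
          Finset.sum_le_sum fun z _ => hterm z
  -- cardinality bound
  have hKcard : K = (Nat.card {z : Fin n → Bool // g z ≠ 0} : ℝ) := by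
    rw [hK]
    congr 1
    rw [Nat.card_eq_fintype_card, Fintype.card_subtype]
  have hεN : (2:ℝ) ^ ((1 - γ) * (n:ℝ)) = (2:ℝ) ^ (-(γ * (n:ℝ))) * Nr := by
    rw [hNr, ← Real.rpow_natCast 2 n, ← Real.rpow_add (by norm_num : (0:ℝ) < 2)]
    congr 1
    ring
  set ε : ℝ := (2:ℝ) ^ (-(γ * (n:ℝ))) with hε
  have hε0 : 0 ≤ ε := le_of_lt (Real.rpow_pos_of_pos (by norm_num) _)
  have hKbound : K ≤ ε * Nr := by
    rw [hKcard]
    calc ((Nat.card {z : Fin n → Bool // g z ≠ 0} : ℝ)) ≤ (2:ℝ) ^ ((1 - γ) * (n:ℝ)) := hcard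
      _ = ε * Nr := hεN
  -- assemble
  have ha0 : (0:ℝ) ≤ a := by rw [ha]; exact sq_nonneg _
  have hP0 : (0:ℝ) ≤ P := by rw [hP]; exact Finset.sum_nonneg fun z _ => sq_nonneg _
  have hfac : (0:ℝ) ≤ b + b ^ 2 * n := by positivity
  have p1 : a * b * (-K) ≤ a * b * Sg :=
    mul_le_mul_of_nonneg_left hSgK (mul_nonneg ha0 hb)
  have p2 : (b + b ^ 2 * n) * (K * a) ≤ (b + b ^ 2 * n) * (ε * Nr * a) :=
    mul_le_mul_of_nonneg_left (mul_le_mul_of_nonneg_right hKbound ha0) hfac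
  have p3 : (0:ℝ) ≤ (b + b ^ 2 * n) * (ε * P) := mul_nonneg hfac (mul_nonneg hε0 hP0)
  have hfrac : P / n = P * (1 / n) := by ring
  have heq : μ * (Nr * a + P) = a * (-Nr + b * Sg) + 2 * b * ((starRingEnd ℂ) c * B0).re + T3.re := by
    rw [← hQeig, hQre2]
  have hmain : (-1 - ε * (b + b ^ 2 * n)) * (Nr * a + P) ≤ μ * (Nr * a + P) := by
    nlinarith [hT3re, hcross, p1, p2, p3, heq, hn0, mul_pos hn0 hn0]
  exact le_of_mul_le_mul_right (by linarith [hmain]) hS0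
end

section
/- Let C₁, C₂ : ℝ → ℝ≥0 be monotone non-decreasing step functions with finitely many jumps (cumulative state functions), each constant between consecutive jumps. Suppose C₁(E) ≥ C₂(E) and C₁(∞) - C₁(E) ≥ C₂(∞) - C₂(E) for all E. If β₁ and β₂ are chosen so that the Gibbs distributions of systems 1 and 2 have the same average energy U, then the entropy of system 1 at β₁ is at least the entropy of system 2 at β₂. -/
open Real MeasureTheory Set Filter Topology

private lemma integral_exp_neg_mul_Ioi' {b : ℝ} (hb : 0 < b) (a : ℝ) :
    ∫ x in Ioi a, Real.exp (-b * x) = Real.exp (-b * a) / b := by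
  have hderiv : ∀ x ∈ Ici a, HasDerivAt (fun x => -Real.exp (-b * x) / b)
      (Real.exp (-b * x)) x := by
    intro x _
    simpa [hb.ne'] using ((hasDerivAt_id x).const_mul b).neg.exp.neg.div_const b
  have htend : Tendsto (fun x => -Real.exp (-b * x) / b) atTop (𝓝 0) := by
    have : Tendsto (fun x => -Real.exp (-b * x) / b) atTop (𝓝 (-0 / b)) := by
      refine Tendsto.div_const (Tendsto.neg ?_) _
      exact Real.tendsto_exp_atBot.comp
        (tendsto_id.const_mul_atTop_of_neg (neg_neg_iff_pos.2 hb))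
    simpa using this
  have h := integral_Ioi_of_hasDerivAt_of_tendsto' hderiv (exp_neg_integrableOn_Ioi a hb) htend
  rw [h]; ring

private lemma key_pos {N₁ N₂ : ℕ} (E₁ : Fin N₁ → ℝ) (w₁ : Fin N₁ → ℝ)
    (E₂ : Fin N₂ → ℝ) (w₂ : Fin N₂ → ℝ)
    (hdom : ∀ E : ℝ,
      (∑ i, w₂ i * (if E₂ i ≤ E then 1 else 0)) ≤ ∑ i, w₁ i * (if E₁ i ≤ E then 1 else 0))
    {β : ℝ} (hβ : 0 < β) :
    (∑ i, w₂ i * Real.exp (-β * E₂ i)) ≤ ∑ i, w₁ i * Real.exp (-β * E₁ i) := by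
  have hint : ∀ (N : ℕ) (E w : Fin N → ℝ) (i : Fin N),
      Integrable ((Ici (E i)).indicator (fun y => w i * Real.exp (-β * y))) := by
    intro N E w i
    exact (integrable_indicator_iff measurableSet_Ici).2
      ((integrableOn_Ici_iff_integrableOn_Ioi).2
        ((exp_neg_integrableOn_Ioi (E i) hβ).const_mul (w i)))
  have repr : ∀ (N : ℕ) (E w : Fin N → ℝ),
      ∑ i, w i * Real.exp (-β * E i)
        = β * ∫ x, ∑ i, (Ici (E i)).indicator (fun y => w i * Real.exp (-β * y)) x := by
    intro N E w
    rw [integral_finset_sum _ (fun i _ => hint N E w i), Finset.mul_sum]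
    refine Finset.sum_congr rfl (fun i _ => ?_)
    rw [integral_indicator measurableSet_Ici, integral_Ici_eq_integral_Ioi,
      MeasureTheory.integral_const_mul, integral_exp_neg_mul_Ioi' hβ]
    field_simp
  have hsum : ∀ (N : ℕ) (E w : Fin N → ℝ) (x : ℝ),
      ∑ i, (Ici (E i)).indicator (fun y => w i * Real.exp (-β * y)) x
        = (∑ i, w i * (if E i ≤ x then 1 else 0)) * Real.exp (-β * x) := by
    intro N E w x
    rw [Finset.sum_mul]
    refine Finset.sum_congr rfl (fun i _ => ?_)
    by_cases h : E i ≤ x <;> simp [Set.indicator_apply, mem_Ici, h]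
  rw [repr N₂ E₂ w₂, repr N₁ E₁ w₁]
  refine mul_le_mul_of_nonneg_left ?_ hβ.le
  refine integral_mono (integrable_finset_sum _ (fun i _ => hint N₂ E₂ w₂ i))
    (integrable_finset_sum _ (fun i _ => hint N₁ E₁ w₁ i)) (fun x => ?_)
  simp only [hsum]
  exact mul_le_mul_of_nonneg_right (hdom x) (Real.exp_pos _).le

private lemma gibbs_variational {N : ℕ} (hN : 0 < N) (E w : Fin N → ℝ) (hw : ∀ i, 0 < w i)
    (β₀ β : ℝ) :
    Real.log (∑ i, w i * Real.exp (-β₀ * E i))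
        + β₀ * ((∑ i, w i * E i * Real.exp (-β₀ * E i)) / (∑ i, w i * Real.exp (-β₀ * E i)))
      ≤ Real.log (∑ i, w i * Real.exp (-β * E i))
        + β * ((∑ i, w i * E i * Real.exp (-β₀ * E i)) / (∑ i, w i * Real.exp (-β₀ * E i))) := by
  have : Nonempty (Fin N) := Fin.pos_iff_nonempty.1 hN
  set Z₀ := ∑ i, w i * Real.exp (-β₀ * E i) with hZ₀def
  set Z := ∑ i, w i * Real.exp (-β * E i) with hZdef
  have hZ₀ : 0 < Z₀ :=
    Finset.sum_pos (fun i _ => mul_pos (hw i) (Real.exp_pos _)) Finset.univ_nonempty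
  have hZ : 0 < Z :=
    Finset.sum_pos (fun i _ => mul_pos (hw i) (Real.exp_pos _)) Finset.univ_nonempty
  set U := (∑ i, w i * E i * Real.exp (-β₀ * E i)) / Z₀ with hUdef
  set P : Fin N → ℝ := fun i => w i * Real.exp (-β₀ * E i) / Z₀ with hPdef
  have hP0 : ∀ i ∈ Finset.univ, (0:ℝ) ≤ P i :=
    fun i _ => div_nonneg (mul_pos (hw i) (Real.exp_pos _)).le hZ₀.le
  have hP1 : ∑ i, P i = 1 := by
    rw [hPdef]
    rw [← Finset.sum_div]
    exact div_self hZ₀.ne'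
  have hPU : ∑ i, P i * E i = U := by
    rw [hUdef, Finset.sum_div]
    exact Finset.sum_congr rfl (fun i _ => by simp only [hPdef]; ring)
  have jensen := convexOn_exp.map_sum_le (t := Finset.univ)
    (p := fun i => (β₀ - β) * E i) hP0 hP1 (fun i _ => Set.mem_univ _)
  have hLHS : (∑ i, P i • ((β₀ - β) * E i)) = (β₀ - β) * U := by
    rw [← hPU, Finset.mul_sum]
    exact Finset.sum_congr rfl (fun i _ => by simp [smul_eq_mul]; ring)
  have hRHS : (∑ i, P i • Real.exp ((β₀ - β) * E i)) = Z / Z₀ := by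
    rw [hZdef, Finset.sum_div]
    refine Finset.sum_congr rfl (fun i _ => ?_)
    rw [smul_eq_mul, hPdef]
    rw [div_mul_eq_mul_div]
    congr 1
    rw [mul_assoc, ← Real.exp_add]
    ring_nf
  rw [hLHS, hRHS] at jensen
  have hlog : (β₀ - β) * U ≤ Real.log Z - Real.log Z₀ := by
    have h1 : Real.log (Real.exp ((β₀ - β) * U)) ≤ Real.log (Z / Z₀) :=
      Real.log_le_log (Real.exp_pos _) jensen
    rwa [Real.log_exp, Real.log_div hZ.ne' hZ₀.ne'] at h1
  linarith

/-- Entropy comparison for two finite statistical-mechanics systems (given by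
energies `E_i` with positive weights `w_i`, whose cumulative state functions are
`C(E) = Σᵢ wᵢ·1[Eᵢ ≤ E]`): if `C₁ ≥ C₂` pointwise and
`C₁(∞) - C₁(E) ≥ C₂(∞) - C₂(E)` pointwise, and `β₁, β₂` are chosen so both Gibbs
distributions have average energy `U`, then the Gibbs entropy of system 1 is at
least that of system 2. -/
theorem entropy_comparison (N₁ N₂ : ℕ) (hN₁ : 0 < N₁) (hN₂ : 0 < N₂)
    (E₁ : Fin N₁ → ℝ) (w₁ : Fin N₁ → ℝ) (hw₁ : ∀ i, 0 < w₁ i)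
    (E₂ : Fin N₂ → ℝ) (w₂ : Fin N₂ → ℝ) (hw₂ : ∀ i, 0 < w₂ i)
    (hdom : ∀ E : ℝ,
      (∑ i, w₂ i * (if E₂ i ≤ E then 1 else 0)) ≤ ∑ i, w₁ i * (if E₁ i ≤ E then 1 else 0))
    (hdom' : ∀ E : ℝ,
      (∑ i, w₂ i) - (∑ i, w₂ i * (if E₂ i ≤ E then 1 else 0))
        ≤ (∑ i, w₁ i) - (∑ i, w₁ i * (if E₁ i ≤ E then 1 else 0)))
    (β₁ β₂ U : ℝ)
    (hU₁ : (∑ i, w₁ i * E₁ i * Real.exp (-β₁ * E₁ i))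
        / (∑ i, w₁ i * Real.exp (-β₁ * E₁ i)) = U)
    (hU₂ : (∑ i, w₂ i * E₂ i * Real.exp (-β₂ * E₂ i))
        / (∑ i, w₂ i * Real.exp (-β₂ * E₂ i)) = U) :
    (Real.log 2)⁻¹ * (Real.log (∑ i, w₂ i * Real.exp (-β₂ * E₂ i)) + β₂ * U)
      ≤ (Real.log 2)⁻¹ * (Real.log (∑ i, w₁ i * Real.exp (-β₁ * E₁ i)) + β₁ * U) := by
  have hne₁ : Nonempty (Fin N₁) := Fin.pos_iff_nonempty.1 hN₁
  have hne₂ : Nonempty (Fin N₂) := Fin.pos_iff_nonempty.1 hN₂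
  -- reversed domination (non-strict version), derived from hdom'
  have hdom'' : ∀ x : ℝ,
      (∑ i, w₂ i * (if x ≤ E₂ i then 1 else 0)) ≤ ∑ i, w₁ i * (if x ≤ E₁ i then 1 else 0) := by
    intro x
    set s : Finset ℝ :=
      (Finset.univ.image E₁ ∪ Finset.univ.image E₂).filter (· < x) with hsdef
    set x' : ℝ := if h : s.Nonempty then (s.max' h + x) / 2 else x - 1 with hx'def
    have hx'lt : x' < x := by
      rw [hx'def]
      split
      · rename_i h
        have := (Finset.mem_filter.1 (s.max'_mem h)).2
        linarith
      · linarith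
    have hiff : ∀ e ∈ Finset.univ.image E₁ ∪ Finset.univ.image E₂, (e ≤ x' ↔ e < x) := by
      intro e he
      constructor
      · intro h; exact lt_of_le_of_lt h hx'lt
      · intro h
        have hes : e ∈ s := Finset.mem_filter.2 ⟨he, h⟩
        have hsne : s.Nonempty := ⟨e, hes⟩
        have hle : e ≤ s.max' hsne := Finset.le_max' s e hes
        have hmx : s.max' hsne < x := (Finset.mem_filter.1 (s.max'_mem hsne)).2
        rw [hx'def, dif_pos hsne]
        linarith
    have flip : ∀ (N : ℕ) (E w : Fin N → ℝ),
        (∀ i, (x ≤ E i ↔ ¬ (E i ≤ x'))) →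
        (∑ i, w i * (if x ≤ E i then 1 else 0))
          = (∑ i, w i) - ∑ i, w i * (if E i ≤ x' then 1 else 0) := by
      intro N E w h
      rw [← Finset.sum_sub_distrib]
      refine Finset.sum_congr rfl (fun i _ => ?_)
      by_cases h' : E i ≤ x'
      · rw [if_neg (fun hx => ((h i).1 hx) h'), if_pos h']; ring
      · rw [if_pos ((h i).2 h'), if_neg h']; ring
    have h2 : ∀ i, (x ≤ E₂ i ↔ ¬ (E₂ i ≤ x')) := by
      intro i
      have := hiff (E₂ i) (Finset.mem_union_right _
        (Finset.mem_image_of_mem E₂ (Finset.mem_univ i)))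
      rw [this, not_lt]
    have h1 : ∀ i, (x ≤ E₁ i ↔ ¬ (E₁ i ≤ x')) := by
      intro i
      have := hiff (E₁ i) (Finset.mem_union_left _
        (Finset.mem_image_of_mem E₁ (Finset.mem_univ i)))
      rw [this, not_lt]
    rw [flip N₂ E₂ w₂ h2, flip N₁ E₁ w₁ h1]
    exact hdom' x'
  -- partition function comparison at every β
  have key : ∀ β : ℝ,
      (∑ i, w₂ i * Real.exp (-β * E₂ i)) ≤ ∑ i, w₁ i * Real.exp (-β * E₁ i) := by
    intro β
    rcases lt_trichotomy β 0 with hβ | hβ | hβ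
    · have hdomneg : ∀ E : ℝ,
          (∑ i, w₂ i * (if -E₂ i ≤ E then 1 else 0))
            ≤ ∑ i, w₁ i * (if -E₁ i ≤ E then 1 else 0) := by
        intro E
        have := hdom'' (-E)
        simpa [neg_le] using this
      have := key_pos (fun i => -E₁ i) w₁ (fun i => -E₂ i) w₂ hdomneg (neg_pos.2 hβ)
      simpa [neg_mul, mul_neg, neg_neg] using this
    · subst hβ
      simp only [neg_zero, zero_mul, Real.exp_zero, mul_one]
      obtain ⟨M, hM⟩ := Finite.exists_le E₂
      calc (∑ i, w₂ i) = ∑ i, w₂ i * (if E₂ i ≤ M then 1 else 0) := by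
            refine Finset.sum_congr rfl (fun i _ => ?_)
            rw [if_pos (hM i), mul_one]
        _ ≤ ∑ i, w₁ i * (if E₁ i ≤ M then 1 else 0) := hdom M
        _ ≤ ∑ i, w₁ i := by
            refine Finset.sum_le_sum (fun i _ => ?_)
            by_cases h : E₁ i ≤ M <;> simp [h, (hw₁ i).le]
    · exact key_pos E₁ w₁ E₂ w₂ hdom hβ
  have hZ₂β₂ : 0 < ∑ i, w₂ i * Real.exp (-β₂ * E₂ i) :=
    Finset.sum_pos (fun i _ => mul_pos (hw₂ i) (Real.exp_pos _)) Finset.univ_nonempty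
  have hZ₂β₁ : 0 < ∑ i, w₂ i * Real.exp (-β₁ * E₂ i) :=
    Finset.sum_pos (fun i _ => mul_pos (hw₂ i) (Real.exp_pos _)) Finset.univ_nonempty
  have step1 : Real.log (∑ i, w₂ i * Real.exp (-β₂ * E₂ i)) + β₂ * U
      ≤ Real.log (∑ i, w₂ i * Real.exp (-β₁ * E₂ i)) + β₁ * U := by
    rw [← hU₂]
    exact gibbs_variational hN₂ E₂ w₂ hw₂ β₂ β₁
  have step2 : Real.log (∑ i, w₂ i * Real.exp (-β₁ * E₂ i))
      ≤ Real.log (∑ i, w₁ i * Real.exp (-β₁ * E₁ i)) :=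
    Real.log_le_log hZ₂β₁ (key β₁)
  have hpos : (0:ℝ) ≤ (Real.log 2)⁻¹ :=
    inv_nonneg.2 (Real.log_nonneg one_le_two)
  exact mul_le_mul_of_nonneg_left (by linarith) hpos
end
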